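/- arXiv:1606.05460 — 3 statements merged into one kernel-verified Lean document; each statement's English description precedes it below -/
import Mathlib

section
/- Bibasic Heine transformation: Let q, h, t be complex numbers with |q^h| < 1, |q^t| < 1 and |q^{ht}| < 1 (principal complex powers), and let a, b, w, z be complex numbers with |w| < 1 and |z| < 1, such that all denominators below are nonzero. Then ((bw;q^t)_∞ / (w;q^t)_∞) · ∑_{k=0}^∞ [(a;q^h)_k / (q^h;q^h)_k] · [(w;q^t)_{hk} / (bw;q^t)_{hk}] · z^k = ((az;q^h)_∞ / (z;q^h)_∞) · ∑_{j=0}^∞ [(b;q^t)_j / (q^t;q^t)_j] · [(z;q^h)_{tj} / (az;q^h)_{tj}] · w^j. -/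
open Complex

/-- Finite q-Pochhammer symbol `(A;Q)_k = ∏_{r=0}^{k-1} (1 - A Q^r)`. -/
noncomputable def qp (A Q : ℂ) (k : ℕ) : ℂ := ∏ r ∈ Finset.range k, (1 - A * Q ^ r)

/-- Infinite q-Pochhammer symbol `(A;Q)_∞ = ∏_{r=0}^{∞} (1 - A Q^r)`. -/
noncomputable def qpInf (A Q : ℂ) : ℂ := ∏' r : ℕ, (1 - A * Q ^ r)

/-- q-Pochhammer symbol with (possibly non-integer) index:
`(A;Q)_{c k} := (A;Q)_∞ / (A R^k;Q)_∞` where `R = Q^c`. -/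
noncomputable def qpc (A Q R : ℂ) (k : ℕ) : ℂ := qpInf A Q / qpInf (A * R ^ k) Q

/-- q-Pochhammer symbol with shifted (possibly non-integer) index:
`(A;Q)_{c k + 1} := (A;Q)_∞ / (A Q R^k;Q)_∞` where `R = Q^c`. -/
noncomputable def qpc1 (A Q R : ℂ) (k : ℕ) : ℂ := qpInf A Q / qpInf (A * Q * R ^ k) Q

open Filter Finset Topology

lemma qp_succ (A Q : ℂ) (n : ℕ) : qp A Q (n + 1) = qp A Q n * (1 - A * Q ^ n) :=
  Finset.prod_range_succ _ _

lemma summable_norm_geo (A : ℂ) {Q : ℂ} (hQ : ‖Q‖ < 1) :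
    Summable (fun r : ℕ => ‖A * Q ^ r‖) := by
  simpa [norm_mul, norm_pow, mul_comm] using
    ((summable_geometric_of_lt_one (norm_nonneg Q) hQ).mul_left ‖A‖)

lemma hasProd_zero_of_factor_zero {f : ℕ → ℂ} {i0 : ℕ} (h : f i0 = 0) : HasProd f 0 := by
  have he : (fun s : Finset ℕ => ∏ i ∈ s, f i) =ᶠ[atTop] fun _ => 0 := by
    filter_upwards [Filter.eventually_ge_atTop ({i0} : Finset ℕ)] with s hs
    exact Finset.prod_eq_zero (hs (Finset.mem_singleton_self i0)) h
  exact (tendsto_congr' he).mpr tendsto_const_nhds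

lemma hasProd_qpInf (A : ℂ) {Q : ℂ} (hQ : ‖Q‖ < 1) :
    HasProd (fun r : ℕ => 1 - A * Q ^ r) (qpInf A Q) := by
  by_cases hz : ∃ r, 1 - A * Q ^ r = 0
  · obtain ⟨r0, hr0⟩ := hz
    have h0 : HasProd (fun r : ℕ => 1 - A * Q ^ r) 0 := hasProd_zero_of_factor_zero hr0
    rw [qpInf, h0.tprod_eq]
    exact h0
  · push_neg at hz
    have hlog : Summable fun n : ℕ => Complex.log (1 - A * Q ^ n) := by
      have htend : Tendsto (fun r : ℕ => ‖A * Q ^ r‖) atTop (𝓝 0) :=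
        (summable_norm_geo A hQ).tendsto_atTop_zero
      have hev : ∀ᶠ r : ℕ in atTop, ‖Complex.log (1 - A * Q ^ r)‖ ≤ (3/2) * ‖A * Q ^ r‖ := by
        filter_upwards [htend.eventually_le_const (by norm_num : (0:ℝ) < 1/2)] with r hr
        have : ‖(-(A * Q ^ r) : ℂ)‖ ≤ 1/2 := by simpa using hr
        simpa [sub_eq_add_neg] using Complex.norm_log_one_add_half_le_self this
      exact ((summable_norm_geo A hQ).mul_left (3/2)).of_norm_bounded_eventually_nat hev
    have := Complex.multipliable_of_summable_log hlog
    exact this.hasProd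

lemma tendsto_qp (A : ℂ) {Q : ℂ} (hQ : ‖Q‖ < 1) :
    Tendsto (fun N => qp A Q N) atTop (𝓝 (qpInf A Q)) :=
  (hasProd_qpInf A hQ).tendsto_prod_nat

lemma weierstrass_prod (s : Finset ℕ) (x : ℕ → ℝ) (h0 : ∀ i, 0 ≤ x i) (h1 : ∀ i, x i ≤ 1) :
    1 - ∑ i ∈ s, x i ≤ ∏ i ∈ s, (1 - x i) := by
  classical
  induction s using Finset.cons_induction with
  | empty => simp
  | cons a s ha ih =>
    rw [Finset.prod_cons, Finset.sum_cons]
    have hs : (0:ℝ) ≤ ∑ i ∈ s, x i := Finset.sum_nonneg fun i _ => h0 i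
    have h2 : (1 - x a) * (1 - ∑ i ∈ s, x i) ≤ (1 - x a) * ∏ i ∈ s, (1 - x i) :=
      mul_le_mul_of_nonneg_left ih (by linarith [h1 a])
    nlinarith [h0 a, h1 a]

lemma qp_norm_upper (A : ℂ) {Q : ℂ} (hQ : ‖Q‖ < 1) (n : ℕ) :
    ‖qp A Q n‖ ≤ Real.exp (‖A‖ * (1 - ‖Q‖)⁻¹) := by
  have h1 : ‖qp A Q n‖ ≤ ∏ r ∈ Finset.range n, (1 + ‖A‖ * ‖Q‖ ^ r) := by
    refine le_trans (norm_prod_le _ _) (Finset.prod_le_prod (fun _ _ => norm_nonneg _) ?_)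
    intro r _
    calc ‖1 - A * Q ^ r‖ ≤ ‖(1:ℂ)‖ + ‖A * Q ^ r‖ := norm_sub_le _ _
      _ = 1 + ‖A‖ * ‖Q‖ ^ r := by simp [norm_mul, norm_pow]
  have h2 : ∏ r ∈ Finset.range n, (1 + ‖A‖ * ‖Q‖ ^ r)
      ≤ Real.exp (∑ r ∈ Finset.range n, ‖A‖ * ‖Q‖ ^ r) := by
    rw [Real.exp_sum]
    refine Finset.prod_le_prod (fun r _ => by positivity) (fun r _ => ?_)
    have := Real.add_one_le_exp (‖A‖ * ‖Q‖ ^ r)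
    linarith
  have h3 : ∑ r ∈ Finset.range n, ‖A‖ * ‖Q‖ ^ r ≤ ‖A‖ * (1 - ‖Q‖)⁻¹ := by
    rw [← Finset.mul_sum]
    refine mul_le_mul_of_nonneg_left ?_ (norm_nonneg A)
    calc ∑ r ∈ Finset.range n, ‖Q‖ ^ r ≤ ∑' r : ℕ, ‖Q‖ ^ r :=
          Summable.sum_le_tsum _ (fun i _ => by positivity)
            (summable_geometric_of_lt_one (norm_nonneg Q) hQ)
      _ = (1 - ‖Q‖)⁻¹ := tsum_geometric_of_lt_one (norm_nonneg Q) hQ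
  exact h1.trans (h2.trans (Real.exp_le_exp.mpr h3))

lemma qp_base_ne_zero {Q : ℂ} (hQ : ‖Q‖ < 1) (n : ℕ) : qp Q Q n ≠ 0 := by
  rw [qp, Finset.prod_ne_zero_iff]
  intro r _
  have h : ‖Q * Q ^ r‖ < 1 := by
    rw [norm_mul, norm_pow]
    calc ‖Q‖ * ‖Q‖ ^ r ≤ ‖Q‖ * 1 := by
          refine mul_le_mul_of_nonneg_left (pow_le_one₀ (norm_nonneg Q) hQ.le) (norm_nonneg Q)
      _ < 1 := by simpa using hQ
  intro hc
  rw [sub_eq_zero] at hc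
  rw [← hc] at h
  simp at h

lemma qp_base_lower {Q : ℂ} (hQ : ‖Q‖ < 1) :
    ∃ C : ℝ, 0 < C ∧ ∀ n, C ≤ ‖qp Q Q n‖ := by
  set u := ‖Q‖ with hu
  have hu0 : 0 ≤ u := norm_nonneg Q
  have hu1 : u < 1 := hQ
  obtain ⟨n0, hn0⟩ : ∃ n0 : ℕ, u ^ n0 < (1 - u) / 2 :=
    exists_pow_lt_of_lt_one (by linarith) hu1
  set x : ℕ → ℝ := fun r => u ^ (r + 1) with hx
  have hx0 : ∀ r, 0 ≤ x r := fun r => by positivity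
  have hx1 : ∀ r, x r ≤ 1 := fun r => pow_le_one₀ hu0 hu1.le
  -- partial products p n
  set p : ℕ → ℝ := fun n => ∏ r ∈ Finset.range n, (1 - x r) with hp
  have hpos : ∀ r, 0 < 1 - x r := by
    intro r
    have : x r ≤ u := by
      simpa [hx] using pow_le_pow_of_le_one hu0 hu1.le (Nat.one_le_iff_ne_zero.mpr (by simp))
    linarith
  have hppos : ∀ n, 0 < p n := fun n => Finset.prod_pos fun r _ => hpos r
  have hanti : ∀ m n, m ≤ n → p n ≤ p m := by
    intro m n hmn
    rw [hp]
    simp only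
    rw [← Finset.prod_range_mul_prod_Ico _ hmn]
    have h2 : ∏ r ∈ Finset.Ico m n, (1 - x r) ≤ 1 :=
      Finset.prod_le_one (fun r _ => (hpos r).le) (fun r _ => by linarith [hx0 r])
    calc (∏ r ∈ Finset.range m, (1 - x r)) * ∏ r ∈ Finset.Ico m n, (1 - x r)
        ≤ (∏ r ∈ Finset.range m, (1 - x r)) * 1 :=
          mul_le_mul_of_nonneg_left h2 (hppos m).le
      _ = p m := by rw [mul_one]
  have key : ∀ n, p n0 / 2 ≤ p n := by
    intro n
    rcases le_or_gt n n0 with hle | hlt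
    · have := hanti n n0 hle
      have := hppos n0
      linarith
    · have hsplit : p n = p n0 * ∏ r ∈ Finset.Ico n0 n, (1 - x r) := by
        rw [hp]; simp only; rw [← Finset.prod_range_mul_prod_Ico _ hlt.le]
      have hsum : ∑ r ∈ Finset.Ico n0 n, x r ≤ 1 / 2 := by
        rw [Finset.sum_Ico_eq_sum_range]
        have h1 : ∀ i, x (n0 + i) = u ^ (n0 + 1) * u ^ i := by
          intro i; rw [hx]; ring
        calc ∑ i ∈ Finset.range (n - n0), x (n0 + i)
            = u ^ (n0 + 1) * ∑ i ∈ Finset.range (n - n0), u ^ i := by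
              rw [Finset.mul_sum]; exact Finset.sum_congr rfl fun i _ => h1 i
          _ ≤ u ^ (n0 + 1) * (1 - u)⁻¹ := by
              refine mul_le_mul_of_nonneg_left ?_ (by positivity)
              calc ∑ i ∈ Finset.range (n - n0), u ^ i ≤ ∑' i : ℕ, u ^ i :=
                    Summable.sum_le_tsum _ (fun i _ => by positivity)
                      (summable_geometric_of_lt_one hu0 hu1)
                _ = (1 - u)⁻¹ := tsum_geometric_of_lt_one hu0 hu1
          _ ≤ 1 / 2 := by
              have h2 : u ^ (n0 + 1) ≤ u ^ n0 := pow_le_pow_of_le_one hu0 hu1.le (by omega)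
              have h3 : u ^ (n0 + 1) ≤ (1 - u) / 2 := le_trans h2 hn0.le
              have h4 : (0:ℝ) < 1 - u := by linarith
              calc u ^ (n0+1) * (1-u)⁻¹ ≤ ((1-u)/2) * (1-u)⁻¹ :=
                    mul_le_mul_of_nonneg_right h3 (by positivity)
                _ = 1/2 := by field_simp
      have hW : 1 - ∑ r ∈ Finset.Ico n0 n, x r ≤ ∏ r ∈ Finset.Ico n0 n, (1 - x r) :=
        weierstrass_prod _ _ hx0 hx1
      have : (1:ℝ)/2 ≤ ∏ r ∈ Finset.Ico n0 n, (1 - x r) := by linarith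
      calc p n0 / 2 = p n0 * (1/2) := by ring
        _ ≤ p n0 * ∏ r ∈ Finset.Ico n0 n, (1 - x r) :=
            mul_le_mul_of_nonneg_left this (hppos n0).le
        _ = p n := hsplit.symm
  refine ⟨p n0 / 2, by linarith [hppos n0], fun n => le_trans (key n) ?_⟩
  rw [qp]
  calc p n = ∏ r ∈ Finset.range n, (1 - x r) := rfl
    _ ≤ ∏ r ∈ Finset.range n, ‖1 - Q * Q ^ r‖ := by
        refine Finset.prod_le_prod (fun r _ => (hpos r).le) (fun r _ => ?_)
        have h1 : ‖Q * Q ^ r‖ = x r := by rw [norm_mul, norm_pow, hx]; ring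
        calc 1 - x r = ‖(1:ℂ)‖ - ‖Q * Q ^ r‖ := by rw [h1]; simp
          _ ≤ ‖1 - Q * Q ^ r‖ := norm_sub_norm_le _ _
    _ = ‖∏ r ∈ Finset.range n, (1 - Q * Q ^ r)‖ := (norm_prod _ _).symm

lemma ratio_bound (a : ℂ) {Q : ℂ} (hQ : ‖Q‖ < 1) :
    ∃ M : ℝ, 0 < M ∧ ∀ n, ‖qp a Q n / qp Q Q n‖ ≤ M := by
  obtain ⟨C, hC, hCle⟩ := qp_base_lower hQ
  refine ⟨Real.exp (‖a‖ * (1 - ‖Q‖)⁻¹) / C, by positivity, fun n => ?_⟩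
  rw [norm_div]
  exact div_le_div₀ (Real.exp_pos _).le (qp_norm_upper a hQ n) hC (hCle n)

lemma qbinom (a : ℂ) {Q x : ℂ} (hQ : ‖Q‖ < 1) (hx : ‖x‖ < 1) (hne : qpInf x Q ≠ 0) :
    (∑' n : ℕ, qp a Q n / qp Q Q n * x ^ n) = qpInf (a * x) Q / qpInf x Q := by
  obtain ⟨M, hM, hMle⟩ := ratio_bound a hQ
  set c : ℕ → ℂ := fun n => qp a Q n / qp Q Q n with hc
  have hc0 : c 0 = 1 := by simp [hc, qp]
  have hrec : ∀ n, c (n + 1) * (1 - Q ^ (n + 1)) = c n * (1 - a * Q ^ n) := by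
    intro n
    have hQn : (1 : ℂ) - Q ^ (n + 1) ≠ 0 := by
      intro hcon; rw [sub_eq_zero] at hcon
      have h : ‖Q ^ (n + 1)‖ < 1 := by
        rw [norm_pow]; exact pow_lt_one₀ (norm_nonneg Q) hQ (by omega)
      rw [← hcon] at h; simp at h
    have hqn : qp Q Q n ≠ 0 := qp_base_ne_zero hQ n
    have hqn1 : qp Q Q (n + 1) ≠ 0 := qp_base_ne_zero hQ (n + 1)
    have hqn1' : qp Q Q (n + 1) = qp Q Q n * (1 - Q ^ (n + 1)) := by
      rw [qp_succ]; ring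
    rw [hc]
    simp only
    rw [qp_succ a, hqn1']
    field_simp
  have hsum : ∀ y : ℂ, ‖y‖ < 1 → Summable (fun n => c n * y ^ n) := by
    intro y hy
    refine Summable.of_norm_bounded
      ((summable_geometric_of_lt_one (norm_nonneg y) hy).mul_left M) (fun n => ?_)
    rw [norm_mul, norm_pow]
    exact mul_le_mul_of_nonneg_right (hMle n) (by positivity)
  set F : ℂ → ℂ := fun y => ∑' n, c n * y ^ n with hF
  have funEq : ∀ y : ℂ, ‖y‖ < 1 → (1 - y) * F y = (1 - a * y) * F (Q * y) := by
    intro y hy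
    have hQy : ‖Q * y‖ < 1 := by
      rw [norm_mul]
      calc ‖Q‖ * ‖y‖ ≤ 1 * ‖y‖ := mul_le_mul_of_nonneg_right hQ.le (norm_nonneg y)
        _ = ‖y‖ := one_mul _
        _ < 1 := hy
    have S1 := hsum y hy
    have S2 := hsum (Q * y) hQy
    have hg : Summable (fun n => c n * y ^ n - c n * (Q * y) ^ n) := S1.sub S2
    have e1 : F y - F (Q * y) = ∑' n, (c n * y ^ n - c n * (Q * y) ^ n) :=
      (Summable.tsum_sub S1 S2).symm
    have e2 : ∑' n, (c n * y ^ n - c n * (Q * y) ^ n)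
        = ∑' n, (c (n + 1) * y ^ (n + 1) - c (n + 1) * (Q * y) ^ (n + 1)) := by
      rw [Summable.tsum_eq_zero_add hg]; simp
    have e3 : ∀ n : ℕ, c (n + 1) * y ^ (n + 1) - c (n + 1) * (Q * y) ^ (n + 1)
        = y * (c n * y ^ n) - (a * y) * (c n * (Q * y) ^ n) := by
      intro n
      have h5 : c (n + 1) * y ^ (n + 1) - c (n + 1) * (Q * y) ^ (n + 1)
          = (c (n + 1) * (1 - Q ^ (n + 1))) * y ^ (n + 1) := by
        rw [mul_pow]; ring
      rw [h5, hrec n, mul_pow]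
      ring
    have e4 : ∑' n, (y * (c n * y ^ n) - (a * y) * (c n * (Q * y) ^ n))
        = y * F y - (a * y) * F (Q * y) := by
      rw [Summable.tsum_sub (S1.mul_left y) (S2.mul_left (a * y)), tsum_mul_left, tsum_mul_left]
    have e5 := e1.trans (e2.trans ((tsum_congr e3).trans e4))
    linear_combination e5
  have iter : ∀ N : ℕ, qp x Q N * F x = qp (a * x) Q N * F (Q ^ N * x) := by
    intro N
    induction N with
    | zero => simp [qp]
    | succ N ih =>
      have hxN : ‖Q ^ N * x‖ < 1 := by
        rw [norm_mul, norm_pow]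
        calc ‖Q‖ ^ N * ‖x‖ ≤ 1 * ‖x‖ :=
              mul_le_mul_of_nonneg_right (pow_le_one₀ (norm_nonneg Q) hQ.le) (norm_nonneg x)
          _ = ‖x‖ := one_mul _
          _ < 1 := hx
      have hfe := funEq (Q ^ N * x) hxN
      rw [qp_succ, qp_succ]
      calc qp x Q N * (1 - x * Q ^ N) * F x
          = (1 - x * Q ^ N) * (qp x Q N * F x) := by ring
        _ = (1 - x * Q ^ N) * (qp (a * x) Q N * F (Q ^ N * x)) := by rw [ih]
        _ = qp (a * x) Q N * ((1 - Q ^ N * x) * F (Q ^ N * x)) := by ring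
        _ = qp (a * x) Q N * ((1 - a * (Q ^ N * x)) * F (Q * (Q ^ N * x))) := by rw [hfe]
        _ = qp (a * x) Q N * (1 - a * x * Q ^ N) * F (Q ^ (N + 1) * x) := by
              rw [show Q * (Q ^ N * x) = Q ^ (N + 1) * x by ring]; ring
  have hFone : Tendsto (fun N : ℕ => F (Q ^ N * x)) atTop (𝓝 1) := by
    have hx1 : (0:ℝ) < 1 - ‖x‖ := by linarith
    have key : ∀ y : ℂ, ‖y‖ ≤ ‖x‖ → ‖F y - 1‖ ≤ M * (1 - ‖x‖)⁻¹ * ‖y‖ := by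
      intro y hy
      have hy1 : ‖y‖ < 1 := lt_of_le_of_lt hy hx
      have S1 := hsum y hy1
      have e0 : F y = 1 + ∑' n, c (n + 1) * y ^ (n + 1) := by
        rw [hF]; simp only; rw [Summable.tsum_eq_zero_add S1, hc0]; simp
      rw [e0, add_sub_cancel_left]
      have hgs : HasSum (fun n : ℕ => (M * ‖y‖) * ‖y‖ ^ n) ((M * ‖y‖) * (1 - ‖y‖)⁻¹) :=
        (hasSum_geometric_of_lt_one (norm_nonneg y) hy1).mul_left _
      have hb : ∀ n : ℕ, ‖c (n + 1) * y ^ (n + 1)‖ ≤ (M * ‖y‖) * ‖y‖ ^ n := by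
        intro n
        rw [norm_mul, norm_pow, pow_succ]
        calc ‖c (n + 1)‖ * (‖y‖ ^ n * ‖y‖) ≤ M * (‖y‖ ^ n * ‖y‖) :=
              mul_le_mul_of_nonneg_right (hMle (n + 1)) (by positivity)
          _ = (M * ‖y‖) * ‖y‖ ^ n := by ring
      calc ‖∑' n, c (n + 1) * y ^ (n + 1)‖ ≤ (M * ‖y‖) * (1 - ‖y‖)⁻¹ :=
            tsum_of_norm_bounded hgs hb
        _ ≤ M * (1 - ‖x‖)⁻¹ * ‖y‖ := by
            have h6 : (1 - ‖y‖)⁻¹ ≤ (1 - ‖x‖)⁻¹ := by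
              apply inv_anti₀ hx1
              linarith
            calc (M * ‖y‖) * (1 - ‖y‖)⁻¹ ≤ (M * ‖y‖) * (1 - ‖x‖)⁻¹ :=
                  mul_le_mul_of_nonneg_left h6 (by positivity)
              _ = M * (1 - ‖x‖)⁻¹ * ‖y‖ := by ring
    have hnorm : ∀ N : ℕ, ‖F (Q ^ N * x) - 1‖ ≤ (M * (1 - ‖x‖)⁻¹ * ‖x‖) * ‖Q‖ ^ N := by
      intro N
      have h7 : ‖Q ^ N * x‖ ≤ ‖x‖ := by
        rw [norm_mul, norm_pow]
        calc ‖Q‖ ^ N * ‖x‖ ≤ 1 * ‖x‖ :=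
              mul_le_mul_of_nonneg_right (pow_le_one₀ (norm_nonneg Q) hQ.le) (norm_nonneg x)
          _ = ‖x‖ := one_mul _
      calc ‖F (Q ^ N * x) - 1‖ ≤ M * (1 - ‖x‖)⁻¹ * ‖Q ^ N * x‖ := key _ h7
        _ = (M * (1 - ‖x‖)⁻¹ * ‖x‖) * ‖Q‖ ^ N := by rw [norm_mul, norm_pow]; ring
    have htz : Tendsto (fun N : ℕ => F (Q ^ N * x) - 1) atTop (𝓝 0) := by
      apply squeeze_zero_norm hnorm
      simpa using (tendsto_pow_atTop_nhds_zero_of_lt_one (norm_nonneg Q) hQ).const_mul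
        (M * (1 - ‖x‖)⁻¹ * ‖x‖)
    have := htz.add_const 1
    simpa using this
  have L1 : Tendsto (fun N => qp x Q N * F x) atTop (𝓝 (qpInf x Q * F x)) :=
    (tendsto_qp x hQ).mul_const _
  have L2 : Tendsto (fun N => qp (a * x) Q N * F (Q ^ N * x)) atTop (𝓝 (qpInf (a * x) Q * 1)) :=
    (tendsto_qp (a * x) hQ).mul hFone
  have L1' : Tendsto (fun N => qp x Q N * F x) atTop (𝓝 (qpInf (a * x) Q * 1)) :=
    L2.congr fun N => (iter N).symm
  have hu := tendsto_nhds_unique L1 L1'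
  have : F x = qpInf (a * x) Q / qpInf x Q := by
    rw [eq_div_iff hne]
    linear_combination hu
  exact this

set_option maxHeartbeats 1000000 in
/-- the bibasic Heine transformation. -/
theorem bibasic_heine (q h t a b w z : ℂ)
    (hqh : ‖q ^ h‖ < 1) (hqt : ‖q ^ t‖ < 1)
    (hqht : ‖q ^ (h * t)‖ < 1)
    (hw : ‖w‖ < 1) (hz : ‖z‖ < 1)
    (h1 : qpInf w (q ^ t) ≠ 0)
    (h2 : qpInf z (q ^ h) ≠ 0)
    (h3 : ∀ k : ℕ, qp (q ^ h) (q ^ h) k ≠ 0)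
    (h4 : ∀ j : ℕ, qp (q ^ t) (q ^ t) j ≠ 0)
    (h5 : ∀ k : ℕ, qpInf (w * (q ^ (h * t)) ^ k) (q ^ t) ≠ 0)
    (h6 : ∀ k : ℕ, qpInf (b * w * (q ^ (h * t)) ^ k) (q ^ t) ≠ 0)
    (h7 : ∀ k : ℕ, qpc (b * w) (q ^ t) (q ^ (h * t)) k ≠ 0)
    (h8 : ∀ j : ℕ, qpInf (z * (q ^ (h * t)) ^ j) (q ^ h) ≠ 0)
    (h9 : ∀ j : ℕ, qpInf (a * z * (q ^ (h * t)) ^ j) (q ^ h) ≠ 0)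
    (h10 : ∀ j : ℕ, qpc (a * z) (q ^ h) (q ^ (h * t)) j ≠ 0) :
    (qpInf (b * w) (q ^ t) / qpInf w (q ^ t)) *
      ∑' k : ℕ, (qp a (q ^ h) k / qp (q ^ h) (q ^ h) k) *
        (qpc w (q ^ t) (q ^ (h * t)) k / qpc (b * w) (q ^ t) (q ^ (h * t)) k) * z ^ k
    = (qpInf (a * z) (q ^ h) / qpInf z (q ^ h)) *
      ∑' j : ℕ, (qp b (q ^ t) j / qp (q ^ t) (q ^ t) j) *
        (qpc z (q ^ h) (q ^ (h * t)) j / qpc (a * z) (q ^ h) (q ^ (h * t)) j) * w ^ j := by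
  obtain ⟨Ma, hMa, hMale⟩ := ratio_bound a hqh
  obtain ⟨Mb, hMb, hMble⟩ := ratio_bound b hqt
  set A : ℕ → ℂ := fun k => qp a (q ^ h) k / qp (q ^ h) (q ^ h) k with hA
  set B : ℕ → ℂ := fun j => qp b (q ^ t) j / qp (q ^ t) (q ^ t) j with hB
  set f : ℕ → ℕ → ℂ :=
    fun k j => A k * z ^ k * (B j * w ^ j * (q ^ (h * t)) ^ (k * j)) with hf
  have hRk : ∀ k : ℕ, ‖q ^ (h * t)‖ ^ k ≤ 1 :=
    fun k => pow_le_one₀ (norm_nonneg _) hqht.le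
  have hwR : ∀ k : ℕ, ‖w * (q ^ (h * t)) ^ k‖ < 1 := by
    intro k
    rw [norm_mul, norm_pow]
    calc ‖w‖ * ‖q ^ (h * t)‖ ^ k ≤ ‖w‖ * 1 :=
          mul_le_mul_of_nonneg_left (hRk k) (norm_nonneg w)
      _ = ‖w‖ := mul_one _
      _ < 1 := hw
  have hzR : ∀ j : ℕ, ‖z * (q ^ (h * t)) ^ j‖ < 1 := by
    intro j
    rw [norm_mul, norm_pow]
    calc ‖z‖ * ‖q ^ (h * t)‖ ^ j ≤ ‖z‖ * 1 :=
          mul_le_mul_of_nonneg_left (hRk j) (norm_nonneg z)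
      _ = ‖z‖ := mul_one _
      _ < 1 := hz
  have hBW : qpInf (b * w) (q ^ t) ≠ 0 := by
    intro h0
    exact h7 0 (by rw [qpc, h0, zero_div])
  have hAZ : qpInf (a * z) (q ^ h) ≠ 0 := by
    intro h0
    exact h10 0 (by rw [qpc, h0, zero_div])
  have hsummf : Summable (Function.uncurry f) := by
    have hs : Summable (fun p : ℕ × ℕ => (Ma * ‖z‖ ^ p.1) * (Mb * ‖w‖ ^ p.2)) :=
      Summable.mul_of_nonneg
        ((summable_geometric_of_lt_one (norm_nonneg z) hz).mul_left Ma)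
        ((summable_geometric_of_lt_one (norm_nonneg w) hw).mul_left Mb)
        (fun k => by positivity) (fun j => by positivity)
    refine Summable.of_norm_bounded hs ?_
    rintro ⟨k, j⟩
    simp only [Function.uncurry, hf, norm_mul, norm_pow]
    have e1 : ‖A k‖ * ‖z‖ ^ k * (‖B j‖ * ‖w‖ ^ j * ‖q ^ (h * t)‖ ^ (k * j))
        ≤ Ma * ‖z‖ ^ k * (Mb * ‖w‖ ^ j * 1) := by
      gcongr
      · exact hMale k
      · exact hMble j
      · exact pow_le_one₀ (norm_nonneg _) hqht.le
    calc ‖A k‖ * ‖z‖ ^ k * (‖B j‖ * ‖w‖ ^ j * ‖q ^ (h * t)‖ ^ (k * j))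
        ≤ Ma * ‖z‖ ^ k * (Mb * ‖w‖ ^ j * 1) := e1
      _ = Ma * ‖z‖ ^ k * (Mb * ‖w‖ ^ j) := by ring
  have hL : (qpInf (b * w) (q ^ t) / qpInf w (q ^ t)) *
      ∑' k : ℕ, A k * (qpc w (q ^ t) (q ^ (h * t)) k / qpc (b * w) (q ^ t) (q ^ (h * t)) k) * z ^ k
      = ∑' k : ℕ, ∑' j : ℕ, f k j := by
    rw [← tsum_mul_left]
    apply tsum_congr
    intro k
    have s1 : (qpInf (b * w) (q ^ t) / qpInf w (q ^ t)) *
        (A k * (qpc w (q ^ t) (q ^ (h * t)) k / qpc (b * w) (q ^ t) (q ^ (h * t)) k) * z ^ k)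
        = A k * z ^ k *
          (qpInf (b * w * (q ^ (h * t)) ^ k) (q ^ t) / qpInf (w * (q ^ (h * t)) ^ k) (q ^ t)) := by
      rw [qpc, qpc]
      field_simp [h1, h5 k, h6 k, hBW]
    rw [s1]
    have s2 : qpInf (b * w * (q ^ (h * t)) ^ k) (q ^ t) / qpInf (w * (q ^ (h * t)) ^ k) (q ^ t)
        = ∑' j : ℕ, qp b (q ^ t) j / qp (q ^ t) (q ^ t) j * (w * (q ^ (h * t)) ^ k) ^ j := by
      rw [qbinom b hqt (hwR k) (h5 k), ← mul_assoc]
    rw [s2, ← tsum_mul_left]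
    apply tsum_congr
    intro j
    rw [hf]
    simp only
    rw [mul_pow, ← pow_mul]
    rw [hB]
    ring
  have hRe : (qpInf (a * z) (q ^ h) / qpInf z (q ^ h)) *
      ∑' j : ℕ, B j * (qpc z (q ^ h) (q ^ (h * t)) j / qpc (a * z) (q ^ h) (q ^ (h * t)) j) * w ^ j
      = ∑' j : ℕ, ∑' k : ℕ, f k j := by
    rw [← tsum_mul_left]
    apply tsum_congr
    intro j
    have s1 : (qpInf (a * z) (q ^ h) / qpInf z (q ^ h)) *
        (B j * (qpc z (q ^ h) (q ^ (h * t)) j / qpc (a * z) (q ^ h) (q ^ (h * t)) j) * w ^ j)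
        = B j * w ^ j *
          (qpInf (a * z * (q ^ (h * t)) ^ j) (q ^ h) / qpInf (z * (q ^ (h * t)) ^ j) (q ^ h)) := by
      rw [qpc, qpc]
      field_simp [h2, h8 j, h9 j, hAZ]
    rw [s1]
    have s2 : qpInf (a * z * (q ^ (h * t)) ^ j) (q ^ h) / qpInf (z * (q ^ (h * t)) ^ j) (q ^ h)
        = ∑' k : ℕ, qp a (q ^ h) k / qp (q ^ h) (q ^ h) k * (z * (q ^ (h * t)) ^ j) ^ k := by
      rw [qbinom a hqh (hzR j) (h8 j), ← mul_assoc]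
    rw [s2, ← tsum_mul_left]
    apply tsum_congr
    intro k
    rw [hf]
    simp only
    rw [mul_pow, ← pow_mul, Nat.mul_comm j k]
    rw [hA]
    ring
  rw [hL, hRe]
  exact (Summable.tsum_comm hsummf).symm
end

section
/- Bibasic form of Ramanujan's Entry 1.4.1: Let q, h, t be complex numbers with |q^h| < 1, |q^t| < 1 and |q^{ht}| < 1 (principal complex powers), let a, b, c, d be complex numbers with a ≠ 0, d ≠ 0, |a q^t| < 1 and |d q^h| < 1, such that all denominators below are nonzero. Then [(aq^t;q^t)_∞ (cq;q^h)_∞ / ((−bq;q^t)_∞ (dq^h;q^h)_∞)] · ∑_{j=0}^∞ [(−bq/a;q^t)_j / (q^t;q^t)_j] · [(dq^h;q^h)_{tj} / (cq;q^h)_{tj+1}] · (aq^t)^j = ∑_{k=0}^∞ [(cq/d;q^h)_k / (q^h;q^h)_k] · [(aq^t;q^t)_{hk} / (−bq;q^t)_{hk+1}] · (dq^h)^k. -/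
set_option maxHeartbeats 1000000


open Complex Filter Finset

namespace QPAux

lemma sum_geom_le {x : ℝ} (hx0 : 0 ≤ x) (hx : x < 1) (n : ℕ) :
    ∑ r ∈ Finset.range n, x ^ r ≤ (1 - x)⁻¹ :=
  (Summable.sum_le_tsum _ (fun _ _ => pow_nonneg hx0 _)
    (summable_geometric_of_lt_one hx0 hx)).trans_eq (tsum_geometric_of_lt_one hx0 hx)

lemma qp_norm_le (A P : ℂ) (hP : ‖P‖ < 1) (n : ℕ) :
    ‖qp A P n‖ ≤ Real.exp (‖A‖ * (1 - ‖P‖)⁻¹) := by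
  rw [qp]
  calc ‖∏ r ∈ range n, (1 - A * P ^ r)‖ = ∏ r ∈ range n, ‖1 - A * P ^ r‖ := by
        simp [norm_prod]
    _ ≤ ∏ r ∈ range n, Real.exp (‖A‖ * ‖P‖ ^ r) := by
        refine Finset.prod_le_prod (fun _ _ => norm_nonneg _) (fun r _ => ?_)
        have h1 : ‖1 - A * P ^ r‖ ≤ 1 + ‖A‖ * ‖P‖ ^ r := by
          calc ‖1 - A * P ^ r‖ ≤ ‖(1:ℂ)‖ + ‖A * P ^ r‖ := norm_sub_le _ _
            _ = 1 + ‖A‖ * ‖P‖ ^ r := by simp [norm_mul, norm_pow]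
        exact h1.trans (by linarith [Real.add_one_le_exp (‖A‖ * ‖P‖ ^ r)])
    _ = Real.exp (∑ r ∈ range n, ‖A‖ * ‖P‖ ^ r) := (Real.exp_sum _ _).symm
    _ ≤ Real.exp (‖A‖ * (1 - ‖P‖)⁻¹) := by
        apply Real.exp_le_exp.2
        rw [← Finset.mul_sum]
        exact mul_le_mul_of_nonneg_left (sum_geom_le (norm_nonneg _) hP n) (norm_nonneg _)


lemma summable_norm_log (A P : ℂ) (hP : ‖P‖ < 1) (hne : ∀ r : ℕ, 1 - A * P ^ r ≠ 0) :
    Summable (fun r : ℕ => ‖Complex.log (1 - A * P ^ r)‖) := by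
  -- find N with ‖A‖ * ‖P‖^N ≤ 1/2
  obtain ⟨N, hN⟩ : ∃ N : ℕ, ‖A‖ * ‖P‖ ^ N ≤ 1/2 := by
    have h := tendsto_pow_atTop_nhds_zero_of_lt_one (norm_nonneg P) hP
    have h2 := h.const_mul ‖A‖
    simp only [mul_zero] at h2
    obtain ⟨N, hN⟩ := (h2.eventually_le_const (by norm_num : (0:ℝ) < 1/2)).exists
    exact ⟨N, hN⟩
  rw [← summable_nat_add_iff N]
  set C : ℝ := ‖A‖ * ‖P‖ ^ N with hC
  have hCnn : 0 ≤ C := by positivity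
  have key : ∀ r : ℕ, ‖Complex.log (1 - A * P ^ (r + N))‖ ≤ 3/2 * C * ‖P‖ ^ r := by
    intro r
    have hnorm : ‖A * P ^ (r + N)‖ = C * ‖P‖ ^ r := by
      rw [norm_mul, norm_pow, pow_add, hC]; ring
    have hsm : ‖-(A * P ^ (r + N))‖ ≤ 1/2 := by
      rw [norm_neg, hnorm]
      calc C * ‖P‖ ^ r ≤ C * 1 :=
            mul_le_mul_of_nonneg_left (pow_le_one₀ (norm_nonneg _) hP.le) hCnn
        _ = C := mul_one C
        _ ≤ 1/2 := hN
    have hlog := Complex.norm_log_one_add_half_le_self hsm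
    rw [show (1 : ℂ) + -(A * P ^ (r + N)) = 1 - A * P ^ (r + N) by ring] at hlog
    rw [norm_neg, hnorm] at hlog
    calc ‖Complex.log (1 - A * P ^ (r + N))‖ ≤ 3/2 * (C * ‖P‖ ^ r) := hlog
      _ = 3/2 * C * ‖P‖ ^ r := by ring
  refine Summable.of_nonneg_of_le (fun r => norm_nonneg _) key ?_
  exact ((summable_geometric_of_lt_one (norm_nonneg P) hP).mul_left _)

lemma summable_log (A P : ℂ) (hP : ‖P‖ < 1) (hne : ∀ r : ℕ, 1 - A * P ^ r ≠ 0) :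
    Summable (fun r : ℕ => Complex.log (1 - A * P ^ r)) :=
  (summable_norm_log A P hP hne).of_norm

lemma qp_eq_exp (A P : ℂ) (hne : ∀ r : ℕ, 1 - A * P ^ r ≠ 0) (n : ℕ) :
    qp A P n = Complex.exp (∑ r ∈ Finset.range n, Complex.log (1 - A * P ^ r)) := by
  rw [qp, Complex.exp_sum]
  exact Finset.prod_congr rfl (fun r _ => (Complex.exp_log (hne r)).symm)

lemma qp_norm_lower (A P : ℂ) (hP : ‖P‖ < 1) (hne : ∀ r : ℕ, 1 - A * P ^ r ≠ 0) (n : ℕ) :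
    Real.exp (-(∑' r : ℕ, ‖Complex.log (1 - A * P ^ r)‖)) ≤ ‖qp A P n‖ := by
  rw [qp_eq_exp A P hne n, Complex.norm_exp]
  apply Real.exp_le_exp.2
  have h1 : ‖∑ r ∈ Finset.range n, Complex.log (1 - A * P ^ r)‖ ≤
      ∑' r : ℕ, ‖Complex.log (1 - A * P ^ r)‖ := by
    refine (norm_sum_le _ _).trans ?_
    exact Summable.sum_le_tsum _ (fun _ _ => norm_nonneg _) (summable_norm_log A P hP hne)
  have h2 := (Complex.abs_re_le_norm (∑ r ∈ Finset.range n, Complex.log (1 - A * P ^ r)))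
  cases' abs_le.1 (h2.trans h1) with hl hr
  exact hl

lemma hasProd_of_ne (A P : ℂ) (hP : ‖P‖ < 1) (hne : ∀ r : ℕ, 1 - A * P ^ r ≠ 0) :
    HasProd (fun r : ℕ => 1 - A * P ^ r)
      (Complex.exp (∑' r : ℕ, Complex.log (1 - A * P ^ r))) := by
  have hfun : (fun r : ℕ => 1 - A * P ^ r) =
      Complex.exp ∘ (fun r : ℕ => Complex.log (1 - A * P ^ r)) :=
    funext fun r => (Complex.exp_log (hne r)).symm
  rw [hfun]
  exact (summable_log A P hP hne).hasSum.cexp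

lemma qpInf_eq_exp (A P : ℂ) (hP : ‖P‖ < 1) (hne : ∀ r : ℕ, 1 - A * P ^ r ≠ 0) :
    qpInf A P = Complex.exp (∑' r : ℕ, Complex.log (1 - A * P ^ r)) :=
  (hasProd_of_ne A P hP hne).tprod_eq

lemma qpInf_ne_zero (A P : ℂ) (hP : ‖P‖ < 1) (hne : ∀ r : ℕ, 1 - A * P ^ r ≠ 0) :
    qpInf A P ≠ 0 := by
  rw [qpInf_eq_exp A P hP hne]; exact Complex.exp_ne_zero _

lemma hasProd_zero (A P : ℂ) {i : ℕ} (hi : 1 - A * P ^ i = 0) :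
    HasProd (fun r : ℕ => 1 - A * P ^ r) 0 := by
  rw [HasProd]
  refine Filter.Tendsto.congr' ?_ tendsto_const_nhds
  rw [Filter.EventuallyEq, SummationFilter.unconditional_filter, eventually_atTop]
  exact ⟨{i}, fun s hs => (Finset.prod_eq_zero (hs (Finset.mem_singleton_self i)) hi).symm⟩

lemma qpInf_eq_zero (A P : ℂ) {i : ℕ} (hi : 1 - A * P ^ i = 0) : qpInf A P = 0 :=
  (hasProd_zero A P hi).tprod_eq


lemma split1 (A P : ℂ) (hP : ‖P‖ < 1) : qpInf A P = (1 - A) * qpInf (A * P) P := by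
  have hshift : ∀ r : ℕ, 1 - A * P ^ (r + 1) = 1 - (A * P) * P ^ r := by
    intro r; rw [pow_succ]; ring
  by_cases hne : ∀ r : ℕ, 1 - A * P ^ r ≠ 0
  · have hne' : ∀ r : ℕ, 1 - (A * P) * P ^ r ≠ 0 := by
      intro r; rw [← hshift r]; exact hne (r + 1)
    rw [qpInf_eq_exp A P hP hne, qpInf_eq_exp (A * P) P hP hne']
    have hsum := summable_log A P hP hne
    rw [Summable.tsum_eq_zero_add hsum]
    rw [Complex.exp_add]
    congr 1
    · simpa using Complex.exp_log (hne 0)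
    · congr 1
      exact tsum_congr fun r => by rw [hshift r]
  · push_neg at hne
    obtain ⟨i, hi⟩ := hne
    rw [qpInf_eq_zero A P hi]
    cases i with
    | zero =>
      simp only [pow_zero, mul_one] at hi
      rw [show (1 : ℂ) - A = 0 by simpa using hi]
      ring
    | succ j =>
      have hz : 1 - (A * P) * P ^ j = 0 := by rw [← hshift j]; exact hi
      rw [qpInf_eq_zero (A * P) P hz]
      ring

lemma splitN (A P : ℂ) (hP : ‖P‖ < 1) (n : ℕ) :
    qpInf A P = qp A P n * qpInf (A * P ^ n) P := by
  induction n with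
  | zero => simp [qp, qpInf]
  | succ m ih =>
    have hqp : qp A P (m + 1) = qp A P m * (1 - A * P ^ m) := Finset.prod_range_succ _ _
    rw [ih, split1 (A * P ^ m) P hP, hqp,
      show A * P ^ m * P = A * P ^ (m + 1) by rw [pow_succ]; ring]
    ring

lemma tail_tendsto (A P : ℂ) (hP : ‖P‖ < 1) :
    Tendsto (fun n : ℕ => qpInf (A * P ^ n) P) atTop (nhds 1) := by
  obtain ⟨N, hN⟩ : ∃ N : ℕ, ∀ n ≥ N, ‖A‖ * ‖P‖ ^ n ≤ 1/2 := by
    have h := (tendsto_pow_atTop_nhds_zero_of_lt_one (norm_nonneg P) hP).const_mul ‖A‖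
    simp only [mul_zero] at h
    exact eventually_atTop.1 (h.eventually_le_const (by norm_num : (0:ℝ) < 1/2))
  have hsmall : ∀ n ≥ N, ∀ r : ℕ, ‖A * P ^ n * P ^ r‖ ≤ 1/2 := by
    intro n hn r
    rw [norm_mul, norm_mul, norm_pow, norm_pow]
    calc ‖A‖ * ‖P‖ ^ n * ‖P‖ ^ r ≤ ‖A‖ * ‖P‖ ^ n * 1 := by
          refine mul_le_mul_of_nonneg_left (pow_le_one₀ (norm_nonneg _) hP.le) (by positivity)
      _ = ‖A‖ * ‖P‖ ^ n := mul_one _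
      _ ≤ 1/2 := hN n hn
  have hne : ∀ n ≥ N, ∀ r : ℕ, 1 - (A * P ^ n) * P ^ r ≠ 0 := by
    intro n hn r h
    have h2 := hsmall n hn r
    have h3 : A * P ^ n * P ^ r = 1 := by linear_combination -h
    rw [h3] at h2
    norm_num at h2
  -- the log tails tend to 0
  set t : ℕ → ℂ := fun n => ∑' r : ℕ, Complex.log (1 - (A * P ^ n) * P ^ r) with ht
  have htend : Tendsto t atTop (nhds 0) := by
    apply squeeze_zero_norm' (a := fun n => 3/2 * (‖A‖ * ‖P‖ ^ n) * (1 - ‖P‖)⁻¹)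
    · rw [eventually_atTop]
      refine ⟨N, fun n hn => ?_⟩
      have hb : ∀ r : ℕ, ‖Complex.log (1 - (A * P ^ n) * P ^ r)‖ ≤
          3/2 * (‖A‖ * ‖P‖ ^ n) * ‖P‖ ^ r := by
        intro r
        have hsm : ‖-(A * P ^ n * P ^ r)‖ ≤ 1/2 := by rw [norm_neg]; exact hsmall n hn r
        have hlog := Complex.norm_log_one_add_half_le_self hsm
        rw [show (1 : ℂ) + -(A * P ^ n * P ^ r) = 1 - (A * P ^ n) * P ^ r by ring] at hlog
        refine hlog.trans ?_
        rw [norm_neg, norm_mul, norm_mul, norm_pow, norm_pow]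
        exact le_of_eq (by ring)
      calc ‖t n‖ ≤ ∑' r : ℕ, ‖Complex.log (1 - (A * P ^ n) * P ^ r)‖ :=
            norm_tsum_le_tsum_norm (summable_norm_log (A * P ^ n) P hP (hne n hn))
        _ ≤ ∑' r : ℕ, 3/2 * (‖A‖ * ‖P‖ ^ n) * ‖P‖ ^ r := by
            refine Summable.tsum_le_tsum hb (summable_norm_log (A * P ^ n) P hP (hne n hn)) ?_
            exact (summable_geometric_of_lt_one (norm_nonneg P) hP).mul_left _
        _ = 3/2 * (‖A‖ * ‖P‖ ^ n) * (1 - ‖P‖)⁻¹ := by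
            rw [tsum_mul_left, tsum_geometric_of_lt_one (norm_nonneg P) hP]
    · have h := (tendsto_pow_atTop_nhds_zero_of_lt_one (norm_nonneg P) hP).const_mul
        (3/2 * ‖A‖)
      simp only [mul_zero] at h
      have h2 := h.mul_const (1 - ‖P‖)⁻¹
      simp only [zero_mul] at h2
      refine h2.congr fun n => by ring
  have hexp : Tendsto (fun n => Complex.exp (t n)) atTop (nhds 1) := by
    have := (Complex.continuous_exp.tendsto 0).comp htend
    simpa [Function.comp_def] using this
  refine Tendsto.congr' ?_ hexp
  rw [EventuallyEq, eventually_atTop]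
  exact ⟨N, fun n hn => (qpInf_eq_exp (A * P ^ n) P hP (hne n hn)).symm⟩

lemma qp_tendsto (A P : ℂ) (hP : ‖P‖ < 1) :
    Tendsto (fun n : ℕ => qp A P n) atTop (nhds (qpInf A P)) := by
  have htail := tail_tendsto A P hP
  have hev : ∀ᶠ n in atTop, qpInf (A * P ^ n) P ≠ 0 :=
    htail.eventually_ne one_ne_zero
  have hinv : Tendsto (fun n : ℕ => qpInf A P * (qpInf (A * P ^ n) P)⁻¹) atTop
      (nhds (qpInf A P)) := by
    have := (htail.inv₀ one_ne_zero).const_mul (qpInf A P)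
    simpa using this
  refine Tendsto.congr' ?_ hinv
  filter_upwards [hev] with n hn
  rw [splitN A P hP n]
  field_simp


section QBinom

lemma one_sub_pp_ne {p : ℂ} (hp : ‖p‖ < 1) (r : ℕ) : 1 - p * p ^ r ≠ 0 := by
  intro h
  have h1 : p * p ^ r = 1 := by linear_combination -h
  have h2 : ‖p * p ^ r‖ < 1 := by
    rw [norm_mul, norm_pow]
    calc ‖p‖ * ‖p‖ ^ r ≤ ‖p‖ * 1 :=
          mul_le_mul_of_nonneg_left (pow_le_one₀ (norm_nonneg _) hp.le) (norm_nonneg _)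
      _ = ‖p‖ := mul_one _
      _ < 1 := hp
  rw [h1] at h2
  norm_num at h2

lemma qp_pp_ne {p : ℂ} (hp : ‖p‖ < 1) (n : ℕ) : qp p p n ≠ 0 := by
  rw [qp]
  exact Finset.prod_ne_zero_iff.2 fun r _ => one_sub_pp_ne hp r

/-- coefficient of the q-binomial series -/
noncomputable def cq (p α : ℂ) (n : ℕ) : ℂ := qp α p n / qp p p n

lemma cq_zero (p α : ℂ) : cq p α 0 = 1 := by simp [cq, qp]

lemma cq_bound (p α : ℂ) (hp : ‖p‖ < 1) :
    ∃ M : ℝ, 0 ≤ M ∧ ∀ n : ℕ, ‖cq p α n‖ ≤ M := by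
  set T : ℝ := ∑' r : ℕ, ‖Complex.log (1 - p * p ^ r)‖ with hT
  refine ⟨Real.exp (‖α‖ * (1 - ‖p‖)⁻¹) * Real.exp T, by positivity, fun n => ?_⟩
  rw [cq, norm_div]
  have hl := qp_norm_lower p p hp (one_sub_pp_ne hp) n
  have hu := qp_norm_le α p hp n
  have hpos : (0:ℝ) < ‖qp p p n‖ := lt_of_lt_of_le (Real.exp_pos _) hl
  rw [div_le_iff₀ hpos]
  calc ‖qp α p n‖ ≤ Real.exp (‖α‖ * (1 - ‖p‖)⁻¹) := hu
    _ = Real.exp (‖α‖ * (1 - ‖p‖)⁻¹) * Real.exp T * Real.exp (-T) := by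
        rw [mul_assoc, ← Real.exp_add]; simp
    _ ≤ Real.exp (‖α‖ * (1 - ‖p‖)⁻¹) * Real.exp T * ‖qp p p n‖ := by
        refine mul_le_mul_of_nonneg_left hl (by positivity)

lemma cq_rec (p α : ℂ) (hp : ‖p‖ < 1) (n : ℕ) :
    cq p α (n + 1) * (1 - p ^ (n + 1)) = cq p α n * (1 - α * p ^ n) := by
  have h1 : qp α p (n + 1) = qp α p n * (1 - α * p ^ n) := Finset.prod_range_succ _ _
  have h2 : qp p p (n + 1) = qp p p n * (1 - p * p ^ n) := Finset.prod_range_succ _ _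
  have h3 : (1 : ℂ) - p ^ (n + 1) = 1 - p * p ^ n := by rw [pow_succ]; ring
  rw [cq, cq, h1, h2, h3]
  have hd1 := qp_pp_ne hp n
  have hd2 := one_sub_pp_ne hp n
  rw [div_mul_eq_mul_div, mul_div_mul_right _ _ hd2]
  ring

lemma summable_of_le_geom {f : ℕ → ℂ} {K x : ℝ} (hx0 : 0 ≤ x) (hx : x < 1)
    (hf : ∀ n, ‖f n‖ ≤ K * x ^ n) : Summable f :=
  Summable.of_norm_bounded ((summable_geometric_of_lt_one hx0 hx).mul_left K) hf

lemma func_eq (p α z : ℂ) (hp : ‖p‖ < 1) (hz : ‖z‖ < 1) :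
    (1 - z) * (∑' n : ℕ, cq p α n * z ^ n)
      = (1 - α * z) * (∑' n : ℕ, cq p α n * (p * z) ^ n) := by
  obtain ⟨M, hM0, hM⟩ := cq_bound p α hp
  have hznn := norm_nonneg z
  have bound : ∀ (g : ℕ → ℂ) (K : ℝ), (∀ n, ‖g n‖ ≤ K * ‖z‖ ^ n) → Summable g :=
    fun g K hg => summable_of_le_geom hznn hz hg
  -- summability facts
  have hployle : ∀ n : ℕ, ‖p ^ n‖ ≤ 1 := fun n => by
    rw [norm_pow]; exact pow_le_one₀ (norm_nonneg _) hp.le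
  have hs1 : Summable (fun n : ℕ => cq p α n * z ^ n) := by
    refine bound _ M fun n => ?_
    rw [norm_mul, norm_pow]
    exact mul_le_mul_of_nonneg_right (hM n) (by positivity)
  have hs2 : Summable (fun n : ℕ => cq p α n * z ^ (n + 1)) := by
    refine bound _ (M * ‖z‖) fun n => ?_
    rw [norm_mul, norm_pow, pow_succ]
    calc ‖cq p α n‖ * (‖z‖ ^ n * ‖z‖) ≤ M * (‖z‖ ^ n * ‖z‖) :=
          mul_le_mul_of_nonneg_right (hM n) (by positivity)
      _ = M * ‖z‖ * ‖z‖ ^ n := by ring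
  have hs3 : Summable (fun n : ℕ => cq p α n * (p * z) ^ n) := by
    refine bound _ M fun n => ?_
    rw [norm_mul, mul_pow, norm_mul, norm_pow, norm_pow]
    calc ‖cq p α n‖ * (‖p‖ ^ n * ‖z‖ ^ n) ≤ M * (1 * ‖z‖ ^ n) := by
          refine mul_le_mul (hM n) ?_ (by positivity) hM0
          exact mul_le_mul_of_nonneg_right (pow_le_one₀ (norm_nonneg _) hp.le) (by positivity)
      _ = M * ‖z‖ ^ n := by ring
  have hs4 : Summable (fun n : ℕ => α * (cq p α n * p ^ n * z ^ (n + 1))) := by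
    refine bound _ (‖α‖ * M * ‖z‖) fun n => ?_
    rw [norm_mul, norm_mul, norm_mul, norm_pow, norm_pow, pow_succ]
    calc ‖α‖ * (‖cq p α n‖ * ‖p‖ ^ n * (‖z‖ ^ n * ‖z‖))
        ≤ ‖α‖ * (M * 1 * (‖z‖ ^ n * ‖z‖)) := by
          refine mul_le_mul_of_nonneg_left ?_ (norm_nonneg _)
          refine mul_le_mul ?_ le_rfl (by positivity) (by positivity)
          exact mul_le_mul (hM n) (pow_le_one₀ (norm_nonneg _) hp.le) (by positivity) hM0
      _ = ‖α‖ * M * ‖z‖ * ‖z‖ ^ n := by ring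
  -- the two middle series
  have hu : Summable (fun n : ℕ => cq p α n * (1 - p ^ n) * z ^ n) := by
    refine bound _ (2 * M) fun n => ?_
    rw [norm_mul, norm_mul, norm_pow]
    have h1 : ‖(1:ℂ) - p ^ n‖ ≤ 2 := by
      calc ‖(1:ℂ) - p ^ n‖ ≤ ‖(1:ℂ)‖ + ‖p ^ n‖ := norm_sub_le _ _
        _ ≤ 1 + 1 := by rw [norm_one]; exact add_le_add le_rfl (hployle n)
        _ = 2 := by norm_num
    calc ‖cq p α n‖ * ‖(1:ℂ) - p ^ n‖ * ‖z‖ ^ n ≤ M * 2 * ‖z‖ ^ n := by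
          refine mul_le_mul_of_nonneg_right (mul_le_mul (hM n) h1 (norm_nonneg _) hM0) (by positivity)
      _ = 2 * M * ‖z‖ ^ n := by ring
  -- key termwise identity
  have hkey : ∀ n : ℕ, cq p α (n + 1) * (1 - p ^ (n + 1)) * z ^ (n + 1)
      = cq p α n * (1 - α * p ^ n) * z ^ (n + 1) := fun n => by
    rw [cq_rec p α hp n]
  -- tsum of u equals tsum of v
  have huv : (∑' n : ℕ, cq p α n * (1 - p ^ n) * z ^ n)
      = ∑' n : ℕ, cq p α n * (1 - α * p ^ n) * z ^ (n + 1) := by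
    rw [Summable.tsum_eq_zero_add hu]
    simp only [pow_zero, sub_self, mul_zero, zero_mul, zero_add, one_mul, mul_one]
    exact tsum_congr fun n => hkey n
  -- expand both sides
  have e1 : (1 - z) * (∑' n : ℕ, cq p α n * z ^ n)
      = (∑' n : ℕ, cq p α n * z ^ n) - ∑' n : ℕ, cq p α n * z ^ (n + 1) := by
    rw [sub_mul, one_mul]
    congr 1
    rw [← tsum_mul_left]
    exact tsum_congr fun n => by rw [pow_succ]; ring
  have e2 : (1 - α * z) * (∑' n : ℕ, cq p α n * (p * z) ^ n)
      = (∑' n : ℕ, cq p α n * (p * z) ^ n)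
        - ∑' n : ℕ, α * (cq p α n * p ^ n * z ^ (n + 1)) := by
    rw [sub_mul, one_mul]
    congr 1
    rw [← tsum_mul_left]
    exact tsum_congr fun n => by rw [mul_pow, pow_succ]; ring
  have e3 : (∑' n : ℕ, cq p α n * z ^ n) - (∑' n : ℕ, cq p α n * (p * z) ^ n)
      = ∑' n : ℕ, cq p α n * (1 - p ^ n) * z ^ n := by
    rw [← Summable.tsum_sub hs1 hs3]
    exact tsum_congr fun n => by rw [mul_pow]; ring
  have e4 : (∑' n : ℕ, cq p α n * z ^ (n + 1))
        - (∑' n : ℕ, α * (cq p α n * p ^ n * z ^ (n + 1)))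
      = ∑' n : ℕ, cq p α n * (1 - α * p ^ n) * z ^ (n + 1) := by
    rw [← Summable.tsum_sub hs2 hs4]
    exact tsum_congr fun n => by ring
  rw [e1, e2]
  linear_combination e3 - e4 + huv

end QBinom

section QBinomMain

lemma S_sub_one_bound (p α z : ℂ) (hp : ‖p‖ < 1) (hz : ‖z‖ < 1)
    {M : ℝ} (hM0 : 0 ≤ M) (hM : ∀ n : ℕ, ‖cq p α n‖ ≤ M)
    {w : ℂ} (hw : ‖w‖ ≤ ‖z‖) :
    ‖(∑' n : ℕ, cq p α n * w ^ n) - 1‖ ≤ M * (1 - ‖z‖)⁻¹ * ‖w‖ := by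
  have hwlt : ‖w‖ < 1 := lt_of_le_of_lt hw hz
  have hs : Summable (fun n : ℕ => cq p α n * w ^ n) := by
    refine summable_of_le_geom (K := M) (norm_nonneg w) hwlt fun n => ?_
    rw [norm_mul, norm_pow]
    exact mul_le_mul_of_nonneg_right (hM n) (by positivity)
  have hs' : Summable (fun n : ℕ => cq p α (n + 1) * w ^ (n + 1)) :=
    (summable_nat_add_iff 1).2 hs
  rw [Summable.tsum_eq_zero_add hs, cq_zero]
  simp only [pow_zero, mul_one]
  rw [add_sub_cancel_left]
  have hterm : ∀ n : ℕ, ‖cq p α (n + 1) * w ^ (n + 1)‖ ≤ M * ‖w‖ * ‖z‖ ^ n := by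
    intro n
    rw [norm_mul, norm_pow, pow_succ]
    calc ‖cq p α (n + 1)‖ * (‖w‖ ^ n * ‖w‖) ≤ M * (‖z‖ ^ n * ‖w‖) := by
          refine mul_le_mul (hM _) ?_ (by positivity) hM0
          exact mul_le_mul_of_nonneg_right (pow_le_pow_left₀ (norm_nonneg _) hw n) (norm_nonneg _)
      _ = M * ‖w‖ * ‖z‖ ^ n := by ring
  calc ‖∑' n : ℕ, cq p α (n + 1) * w ^ (n + 1)‖
      ≤ ∑' n : ℕ, ‖cq p α (n + 1) * w ^ (n + 1)‖ := norm_tsum_le_tsum_norm hs'.norm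
    _ ≤ ∑' n : ℕ, M * ‖w‖ * ‖z‖ ^ n := by
        refine Summable.tsum_le_tsum hterm hs'.norm ?_
        exact (summable_geometric_of_lt_one (norm_nonneg z) hz).mul_left _
    _ = M * ‖w‖ * (1 - ‖z‖)⁻¹ := by
        rw [tsum_mul_left, tsum_geometric_of_lt_one (norm_nonneg z) hz]
    _ = M * (1 - ‖z‖)⁻¹ * ‖w‖ := by ring

theorem qbinom (p α z : ℂ) (hp : ‖p‖ < 1) (hz : ‖z‖ < 1) :
    (∑' n : ℕ, (qp α p n / qp p p n) * z ^ n) * qpInf z p = qpInf (α * z) p := by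
  obtain ⟨M, hM0, hM⟩ := cq_bound p α hp
  set S : ℂ → ℂ := fun w => ∑' n : ℕ, cq p α n * w ^ n with hS
  set E : ℂ → ℂ := fun w => S w * qpInf w p - qpInf (α * w) p with hE
  have one_step : ∀ w : ℂ, ‖w‖ < 1 → E w = (1 - α * w) * E (p * w) := by
    intro w hw
    have h1 : qpInf w p = (1 - w) * qpInf (w * p) p := split1 w p hp
    have h2 : qpInf (α * w) p = (1 - α * w) * qpInf (α * w * p) p := split1 (α * w) p hp
    have h3 := func_eq p α w hp hw
    have h4 : w * p = p * w := mul_comm w p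
    have h5 : α * w * p = α * (p * w) := by ring
    rw [h4] at h1
    rw [h5] at h2
    simp only [hE, hS]
    rw [h1, h2]
    calc (∑' n : ℕ, cq p α n * w ^ n) * ((1 - w) * qpInf (p * w) p)
          - (1 - α * w) * qpInf (α * (p * w)) p
        = ((1 - w) * (∑' n : ℕ, cq p α n * w ^ n)) * qpInf (p * w) p
          - (1 - α * w) * qpInf (α * (p * w)) p := by ring
      _ = ((1 - α * w) * (∑' n : ℕ, cq p α n * (p * w) ^ n)) * qpInf (p * w) p
          - (1 - α * w) * qpInf (α * (p * w)) p := by rw [h3]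
      _ = (1 - α * w) * ((∑' n : ℕ, cq p α n * (p * w) ^ n) * qpInf (p * w) p
          - qpInf (α * (p * w)) p) := by ring
  have hpowlt : ∀ N : ℕ, ‖p ^ N * z‖ < 1 := by
    intro N
    rw [norm_mul, norm_pow]
    calc ‖p‖ ^ N * ‖z‖ ≤ 1 * ‖z‖ :=
          mul_le_mul_of_nonneg_right (pow_le_one₀ (norm_nonneg _) hp.le) (norm_nonneg _)
      _ = ‖z‖ := one_mul _
      _ < 1 := hz
  have iterate : ∀ N : ℕ, E z = qp (α * z) p N * E (p ^ N * z) := by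
    intro N
    induction N with
    | zero => simp [qp]
    | succ m ih =>
      rw [ih, one_step (p ^ m * z) (hpowlt m)]
      have hqp : qp (α * z) p (m + 1) = qp (α * z) p m * (1 - (α * z) * p ^ m) :=
        Finset.prod_range_succ _ _
      rw [hqp, show p * (p ^ m * z) = p ^ (m + 1) * z by rw [pow_succ]; ring,
        show (1 : ℂ) - α * (p ^ m * z) = 1 - α * z * p ^ m by ring]
      ring
  have limqp : Tendsto (fun N : ℕ => qp (α * z) p N) atTop (nhds (qpInf (α * z) p)) :=
    qp_tendsto (α * z) p hp
  have hwle : ∀ N : ℕ, ‖p ^ N * z‖ ≤ ‖z‖ := by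
    intro N
    rw [norm_mul, norm_pow]
    calc ‖p‖ ^ N * ‖z‖ ≤ 1 * ‖z‖ :=
          mul_le_mul_of_nonneg_right (pow_le_one₀ (norm_nonneg _) hp.le) (norm_nonneg _)
      _ = ‖z‖ := one_mul _
  have limS : Tendsto (fun N : ℕ => S (p ^ N * z)) atTop (nhds 1) := by
    have hb : Tendsto (fun N : ℕ => S (p ^ N * z) - 1) atTop (nhds 0) := by
      apply squeeze_zero_norm (a := fun N : ℕ => M * (1 - ‖z‖)⁻¹ * ‖z‖ * ‖p‖ ^ N)
      · intro N
        have hbnd := S_sub_one_bound p α z hp hz hM0 hM (hwle N)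
        refine hbnd.trans ?_
        rw [norm_mul, norm_pow]
        exact le_of_eq (by ring)
      · have h := (tendsto_pow_atTop_nhds_zero_of_lt_one (norm_nonneg p) hp).const_mul
          (M * (1 - ‖z‖)⁻¹ * ‖z‖)
        simpa using h
    have h2 := hb.add_const 1
    simpa using h2
  have limtail1 : Tendsto (fun N : ℕ => qpInf (p ^ N * z) p) atTop (nhds 1) := by
    have h := tail_tendsto z p hp
    exact h.congr fun N => by rw [mul_comm]
  have limtail2 : Tendsto (fun N : ℕ => qpInf (α * (p ^ N * z)) p) atTop (nhds 1) := by
    have h := tail_tendsto (α * z) p hp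
    exact h.congr fun N => by rw [show α * z * p ^ N = α * (p ^ N * z) by ring]
  have limE : Tendsto (fun N : ℕ => E (p ^ N * z)) atTop (nhds 0) := by
    have h := (limS.mul limtail1).sub limtail2
    simpa [hE] using h
  have limprod : Tendsto (fun N : ℕ => qp (α * z) p N * E (p ^ N * z)) atTop
      (nhds (qpInf (α * z) p * 0)) := limqp.mul limE
  have hconst : Tendsto (fun _ : ℕ => E z) atTop (nhds (E z)) := tendsto_const_nhds
  have hEz : E z = qpInf (α * z) p * 0 :=
    tendsto_nhds_unique (hconst.congr fun N => iterate N) limprod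
  have hfin : S z * qpInf z p - qpInf (α * z) p = 0 := by
    have h := hEz
    simp only [hE] at h
    rw [h]; ring
  have hgoal : S z * qpInf z p = qpInf (α * z) p := sub_eq_zero.1 hfin
  simpa [hS, cq] using hgoal

end QBinomMain

end QPAux


lemma qdiv_helper (A X N1 D1 N2 S : ℂ) (hD1 : D1 ≠ 0) (hN2 : N2 ≠ 0) (hS : S ≠ 0) :
    A * ((N1 / D1) / (N2 / (S * D1))) * X = N1 / N2 * (A * X * S) := by
  field_simp

lemma pref_helper (Xi Ci Bi Yi T : ℂ) (hB : Bi ≠ 0) (hY : Yi ≠ 0) (hC : Ci ≠ 0) :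
    (Xi * Ci / (Bi * Yi)) * (Yi / Ci * T) = Xi / Bi * T := by
  field_simp


/-- bibasic form of Ramanujan's Entry 1.4.1. -/
theorem entry_1_4_1_bibasic (q h t a b c d : ℂ)
    (hqh : ‖q ^ h‖ < 1) (hqt : ‖q ^ t‖ < 1)
    (hqht : ‖q ^ (h * t)‖ < 1)
    (ha : a ≠ 0) (hd : d ≠ 0)
    (haq : ‖a * q ^ t‖ < 1) (hdq : ‖d * q ^ h‖ < 1)
    (h1 : qpInf (-b * q) (q ^ t) ≠ 0)
    (h2 : qpInf (d * q ^ h) (q ^ h) ≠ 0)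
    (h3 : ∀ j : ℕ, qp (q ^ t) (q ^ t) j ≠ 0)
    (h4 : ∀ j : ℕ, qpc1 (c * q) (q ^ h) (q ^ (h * t)) j ≠ 0)
    (h5 : ∀ j : ℕ, qpInf (d * q ^ h * (q ^ (h * t)) ^ j) (q ^ h) ≠ 0)
    (h6 : ∀ j : ℕ, qpInf (c * q * q ^ h * (q ^ (h * t)) ^ j) (q ^ h) ≠ 0)
    (h7 : ∀ k : ℕ, qp (q ^ h) (q ^ h) k ≠ 0)
    (h8 : ∀ k : ℕ, qpc1 (-b * q) (q ^ t) (q ^ (h * t)) k ≠ 0)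
    (h9 : ∀ k : ℕ, qpInf (a * q ^ t * (q ^ (h * t)) ^ k) (q ^ t) ≠ 0)
    (h10 : ∀ k : ℕ, qpInf (-b * q * q ^ t * (q ^ (h * t)) ^ k) (q ^ t) ≠ 0) :
    (qpInf (a * q ^ t) (q ^ t) * qpInf (c * q) (q ^ h) /
        (qpInf (-b * q) (q ^ t) * qpInf (d * q ^ h) (q ^ h))) *
      ∑' j : ℕ, (qp (-b * q / a) (q ^ t) j / qp (q ^ t) (q ^ t) j) *
        (qpc (d * q ^ h) (q ^ h) (q ^ (h * t)) j / qpc1 (c * q) (q ^ h) (q ^ (h * t)) j) *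
        (a * q ^ t) ^ j
    = ∑' k : ℕ, (qp (c * q / d) (q ^ h) k / qp (q ^ h) (q ^ h) k) *
        (qpc (a * q ^ t) (q ^ t) (q ^ (h * t)) k / qpc1 (-b * q) (q ^ t) (q ^ (h * t)) k) *
        (d * q ^ h) ^ k := by
  have hP : ‖q ^ t‖ < 1 := by exact hqt
  have hp : ‖q ^ h‖ < 1 := by exact hqh
  have hQ : ‖q ^ (h * t)‖ < 1 := by exact hqht
  have hX : ‖a * q ^ t‖ < 1 := by exact haq
  have hY : ‖d * q ^ h‖ < 1 := by exact hdq
  have hQpow : ∀ n : ℕ, ‖(q ^ (h * t)) ^ n‖ ≤ 1 := fun n => by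
    rw [norm_pow]; exact pow_le_one₀ (norm_nonneg _) hQ.le
  have hYQ : ∀ j : ℕ, ‖d * q ^ h * (q ^ (h * t)) ^ j‖ < 1 := fun j => by
    rw [norm_mul]
    calc ‖d * q ^ h‖ * ‖(q ^ (h * t)) ^ j‖ ≤ ‖d * q ^ h‖ * 1 :=
          mul_le_mul_of_nonneg_left (hQpow j) (norm_nonneg _)
      _ = ‖d * q ^ h‖ := mul_one _
      _ < 1 := hY
  have hXQ : ∀ k : ℕ, ‖a * q ^ t * (q ^ (h * t)) ^ k‖ < 1 := fun k => by
    rw [norm_mul]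
    calc ‖a * q ^ t‖ * ‖(q ^ (h * t)) ^ k‖ ≤ ‖a * q ^ t‖ * 1 :=
          mul_le_mul_of_nonneg_left (hQpow k) (norm_nonneg _)
      _ = ‖a * q ^ t‖ := mul_one _
      _ < 1 := hX
  have h4' : ∀ j : ℕ, qpInf (c * q) (q ^ h) /
      qpInf (c * q * q ^ h * (q ^ (h * t)) ^ j) (q ^ h) ≠ 0 := by
    intro j; have := h4 j; rwa [qpc1] at this
  have hN2 : qpInf (c * q) (q ^ h) ≠ 0 := (div_ne_zero_iff.1 (h4' 0)).1
  -- key per-j identity for the LHS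
  have key1 : ∀ j : ℕ,
      (qp (-b * q / a) (q ^ t) j / qp (q ^ t) (q ^ t) j) *
        (qpc (d * q ^ h) (q ^ h) (q ^ (h * t)) j / qpc1 (c * q) (q ^ h) (q ^ (h * t)) j) *
        (a * q ^ t) ^ j
      = (qpInf (d * q ^ h) (q ^ h) / qpInf (c * q) (q ^ h)) *
        ((qp (-b * q / a) (q ^ t) j / qp (q ^ t) (q ^ t) j) * (a * q ^ t) ^ j *
          ∑' k : ℕ, (qp (c * q / d) (q ^ h) k / qp (q ^ h) (q ^ h) k) *
            (d * q ^ h * (q ^ (h * t)) ^ j) ^ k) := by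
    intro j
    have hqb := QPAux.qbinom (q ^ h) (c * q / d) (d * q ^ h * (q ^ (h * t)) ^ j) hp (hYQ j)
    have harg : (c * q / d) * (d * q ^ h * (q ^ (h * t)) ^ j)
        = c * q * q ^ h * (q ^ (h * t)) ^ j := by field_simp
    rw [harg] at hqb
    have hD1 := h5 j
    have hSk : (∑' k : ℕ, (qp (c * q / d) (q ^ h) k / qp (q ^ h) (q ^ h) k) *
        (d * q ^ h * (q ^ (h * t)) ^ j) ^ k) ≠ 0 := by
      intro h0
      rw [h0, zero_mul] at hqb
      exact h6 j hqb.symm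
    rw [qpc, qpc1, ← hqb]
    exact qdiv_helper _ _ _ _ _ _ hD1 hN2 hSk
  -- key per-k identity for the RHS
  have key3 : ∀ k : ℕ,
      (qp (c * q / d) (q ^ h) k / qp (q ^ h) (q ^ h) k) *
        (qpc (a * q ^ t) (q ^ t) (q ^ (h * t)) k / qpc1 (-b * q) (q ^ t) (q ^ (h * t)) k) *
        (d * q ^ h) ^ k
      = (qpInf (a * q ^ t) (q ^ t) / qpInf (-b * q) (q ^ t)) *
        ((qp (c * q / d) (q ^ h) k / qp (q ^ h) (q ^ h) k) * (d * q ^ h) ^ k *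
          ∑' j : ℕ, (qp (-b * q / a) (q ^ t) j / qp (q ^ t) (q ^ t) j) *
            (a * q ^ t * (q ^ (h * t)) ^ k) ^ j) := by
    intro k
    have hqb := QPAux.qbinom (q ^ t) (-b * q / a) (a * q ^ t * (q ^ (h * t)) ^ k) hP (hXQ k)
    have harg : (-b * q / a) * (a * q ^ t * (q ^ (h * t)) ^ k)
        = -b * q * q ^ t * (q ^ (h * t)) ^ k := by field_simp
    rw [harg] at hqb
    have hD3 := h9 k
    have hD4 := h10 k
    have hSj : (∑' j : ℕ, (qp (-b * q / a) (q ^ t) j / qp (q ^ t) (q ^ t) j) *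
        (a * q ^ t * (q ^ (h * t)) ^ k) ^ j) ≠ 0 := by
      intro h0
      rw [h0, zero_mul] at hqb
      exact hD4 hqb.symm
    rw [qpc, qpc1, ← hqb]
    exact qdiv_helper _ _ _ _ _ _ hD3 h1 hSj
  -- the double-sum terms
  obtain ⟨MA, hMA0, hMAb⟩ := QPAux.cq_bound (q ^ t) (-b * q / a) hP
  obtain ⟨MB, hMB0, hMBb⟩ := QPAux.cq_bound (q ^ h) (c * q / d) hp
  set F : ℕ → ℕ → ℂ := fun j k =>
    (qp (-b * q / a) (q ^ t) j / qp (q ^ t) (q ^ t) j) * (a * q ^ t) ^ j *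
      ((qp (c * q / d) (q ^ h) k / qp (q ^ h) (q ^ h) k) * (d * q ^ h) ^ k *
        ((q ^ (h * t)) ^ j) ^ k) with hF
  have key2 : ∀ j : ℕ,
      (qp (-b * q / a) (q ^ t) j / qp (q ^ t) (q ^ t) j) * (a * q ^ t) ^ j *
        (∑' k : ℕ, (qp (c * q / d) (q ^ h) k / qp (q ^ h) (q ^ h) k) *
          (d * q ^ h * (q ^ (h * t)) ^ j) ^ k)
      = ∑' k : ℕ, F j k := by
    intro j
    rw [← tsum_mul_left]
    refine tsum_congr fun k => ?_
    simp only [hF]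
    ring
  have key4 : ∀ k : ℕ,
      (qp (c * q / d) (q ^ h) k / qp (q ^ h) (q ^ h) k) * (d * q ^ h) ^ k *
        (∑' j : ℕ, (qp (-b * q / a) (q ^ t) j / qp (q ^ t) (q ^ t) j) *
          (a * q ^ t * (q ^ (h * t)) ^ k) ^ j)
      = ∑' j : ℕ, F j k := by
    intro k
    rw [← tsum_mul_left]
    refine tsum_congr fun j => ?_
    simp only [hF]
    ring
  -- Fubini
  have hsum : Summable (Function.uncurry F) := by
    refine Summable.of_norm_bounded
      (g := fun x : ℕ × ℕ => (MA * ‖a * q ^ t‖ ^ x.1) * (MB * ‖d * q ^ h‖ ^ x.2)) ?_ ?_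
    · exact Summable.mul_of_nonneg
        ((summable_geometric_of_lt_one (norm_nonneg _) hX).mul_left MA)
        ((summable_geometric_of_lt_one (norm_nonneg _) hY).mul_left MB)
        (fun j => by positivity) (fun k => by positivity)
    · rintro ⟨j, k⟩
      have hAj : ‖qp (-b * q / a) (q ^ t) j / qp (q ^ t) (q ^ t) j‖ ≤ MA := by
        have := hMAb j; rwa [QPAux.cq] at this
      have hBk : ‖qp (c * q / d) (q ^ h) k / qp (q ^ h) (q ^ h) k‖ ≤ MB := by
        have := hMBb k; rwa [QPAux.cq] at this
      have hQjk : ‖((q ^ (h * t)) ^ j) ^ k‖ ≤ 1 := by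
        rw [norm_pow]
        exact pow_le_one₀ (norm_nonneg _) (hQpow j)
      calc ‖Function.uncurry F (j, k)‖
          = ‖qp (-b * q / a) (q ^ t) j / qp (q ^ t) (q ^ t) j‖ * ‖a * q ^ t‖ ^ j *
            (‖qp (c * q / d) (q ^ h) k / qp (q ^ h) (q ^ h) k‖ * ‖d * q ^ h‖ ^ k *
              ‖((q ^ (h * t)) ^ j) ^ k‖) := by
            simp only [Function.uncurry, hF]
            rw [norm_mul, norm_mul, norm_mul, norm_mul, norm_pow, norm_pow]
        _ ≤ MA * ‖a * q ^ t‖ ^ j * (MB * ‖d * q ^ h‖ ^ k * 1) := by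
            gcongr
        _ = (MA * ‖a * q ^ t‖ ^ j) * (MB * ‖d * q ^ h‖ ^ k) := by ring
  have hfub : (∑' k : ℕ, ∑' j : ℕ, F j k) = ∑' j : ℕ, ∑' k : ℕ, F j k := Summable.tsum_comm hsum
  -- assemble
  have hL : (qpInf (a * q ^ t) (q ^ t) * qpInf (c * q) (q ^ h) /
        (qpInf (-b * q) (q ^ t) * qpInf (d * q ^ h) (q ^ h))) *
      ∑' j : ℕ, (qp (-b * q / a) (q ^ t) j / qp (q ^ t) (q ^ t) j) *
        (qpc (d * q ^ h) (q ^ h) (q ^ (h * t)) j / qpc1 (c * q) (q ^ h) (q ^ (h * t)) j) *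
        (a * q ^ t) ^ j
      = (qpInf (a * q ^ t) (q ^ t) / qpInf (-b * q) (q ^ t)) * ∑' j : ℕ, ∑' k : ℕ, F j k := by
    rw [tsum_congr key1, tsum_mul_left, tsum_congr key2]
    exact pref_helper _ _ _ _ _ h1 h2 hN2
  have hR : (∑' k : ℕ, (qp (c * q / d) (q ^ h) k / qp (q ^ h) (q ^ h) k) *
        (qpc (a * q ^ t) (q ^ t) (q ^ (h * t)) k / qpc1 (-b * q) (q ^ t) (q ^ (h * t)) k) *
        (d * q ^ h) ^ k)
      = (qpInf (a * q ^ t) (q ^ t) / qpInf (-b * q) (q ^ t)) * ∑' k : ℕ, ∑' j : ℕ, F j k := by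
    rw [tsum_congr key3, tsum_mul_left, tsum_congr key4]
  rw [hL, hR, hfub]
end

section
/- Bibasic generalization of Entry 1.4.2: Let q, h, t be complex numbers with |q^h| < 1, |q^t| < 1 and |q^{ht}| < 1 (principal complex powers), and let a, b be complex numbers such that all denominators below are nonzero. Then [(q^t;q^t)_∞ (aq;q^h)_∞ / (q^h;q^h)_∞] · ∑_{j=0}^∞ [(−bq;q^t)_j / (q^t;q^t)_j] · [(q^h;q^h)_{tj} / (aq;q^h)_{tj+1}] · (q^t)^j = (−bq;q^t)_∞ · ∑_{k=0}^∞ [(aq;q^h)_k / (q^h;q^h)_k] · [(q^t;q^t)_{hk} / (−bq;q^t)_{hk+1}] · (q^h)^k. -/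
open Complex

open Filter

namespace QAux

/-- The series `S(w) = ∑ (A;Q)_k/(Q;Q)_k w^k`. -/
noncomputable def qS (A Q w : ℂ) : ℂ := ∑' k : ℕ, qp A Q k / qp Q Q k * w ^ k

lemma qpInf_eq_zero {A Q : ℂ} {r : ℕ} (hr : 1 - A * Q ^ r = 0) : qpInf A Q = 0 := by
  have hp : HasProd (fun r : ℕ => 1 - A * Q ^ r) 0 := by
    have he : ∀ᶠ s : Finset ℕ in atTop, (0 : ℂ) = ∏ i ∈ s, (1 - A * Q ^ i) := by
      filter_upwards [Filter.eventually_ge_atTop ({r} : Finset ℕ)] with s hs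
      exact (Finset.prod_eq_zero (hs (Finset.mem_singleton_self r)) hr).symm
    exact tendsto_const_nhds.congr' he
  rw [qpInf]
  exact hp.tprod_eq

lemma factor_ne_zero {A Q : ℂ} (h : qpInf A Q ≠ 0) (r : ℕ) : 1 - A * Q ^ r ≠ 0 :=
  fun hr => h (qpInf_eq_zero hr)

lemma summable_log {A Q : ℂ} (hQ : ‖Q‖ < 1) :
    Summable fun r : ℕ => Complex.log (1 - A * Q ^ r) := by
  have hg : Summable fun r : ℕ => 3 / 2 * ‖A‖ * ‖Q‖ ^ r :=
    (summable_geometric_of_lt_one (norm_nonneg Q) hQ).mul_left _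
  apply hg.of_norm_bounded_eventually_nat
  have h0 : Tendsto (fun r : ℕ => ‖A‖ * ‖Q‖ ^ r) atTop (nhds 0) := by
    simpa using (tendsto_pow_atTop_nhds_zero_of_lt_one (norm_nonneg Q) hQ).const_mul
      (‖A‖)
  filter_upwards [h0.eventually_lt_const (by norm_num : (0:ℝ) < 1/2)] with r hr
  have hz : ‖-(A * Q ^ r)‖ ≤ 1 / 2 := by
    rw [norm_neg, norm_mul, norm_pow]
    exact hr.le
  have hb := Complex.norm_log_one_add_half_le_self hz
  have he : (1 : ℂ) + -(A * Q ^ r) = 1 - A * Q ^ r := by ring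
  rw [he] at hb
  refine hb.trans (le_of_eq ?_)
  rw [norm_neg, norm_mul, norm_pow]
  ring

lemma hasProd_qpInf {A Q : ℂ} (hQ : ‖Q‖ < 1) (hn : ∀ r : ℕ, 1 - A * Q ^ r ≠ 0) :
    HasProd (fun r : ℕ => 1 - A * Q ^ r) (qpInf A Q) := by
  have := Complex.hasProd_of_hasSum_log (f := fun r : ℕ => 1 - A * Q ^ r) hn (summable_log hQ).hasSum
  rw [qpInf, this.tprod_eq]
  exact this

lemma tendsto_qp {A Q : ℂ} (hQ : ‖Q‖ < 1) (hn : ∀ r : ℕ, 1 - A * Q ^ r ≠ 0) :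
    Tendsto (fun n => qp A Q n) atTop (nhds (qpInf A Q)) := by
  simpa [qp] using (hasProd_qpInf hQ hn).tendsto_prod_nat

lemma geom_tail {Q : ℂ} (hQ : ‖Q‖ < 1) (k : ℕ) :
    ∑ r ∈ Finset.range k, ‖Q‖ ^ r ≤ (1 - ‖Q‖)⁻¹ := by
  calc ∑ r ∈ Finset.range k, ‖Q‖ ^ r ≤ ∑' r : ℕ, ‖Q‖ ^ r :=
        Summable.sum_le_tsum _ (fun i _ => pow_nonneg (norm_nonneg Q) i)
          (summable_geometric_of_lt_one (norm_nonneg Q) hQ)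
    _ = (1 - ‖Q‖)⁻¹ := tsum_geometric_of_lt_one (norm_nonneg Q) hQ

lemma abs_qp_le {A Q : ℂ} (hQ : ‖Q‖ < 1) (k : ℕ) :
    ‖qp A Q k‖ ≤ Real.exp (‖A‖ * (1 - ‖Q‖)⁻¹) := by
  rw [qp, norm_prod]
  calc ∏ r ∈ Finset.range k, ‖1 - A * Q ^ r‖
      ≤ ∏ r ∈ Finset.range k, Real.exp (‖A‖ * ‖Q‖ ^ r) := by
        apply Finset.prod_le_prod (fun _ _ => norm_nonneg _)
        intro r _
        have h1 : ‖1 - A * Q ^ r‖ ≤ 1 + ‖A‖ * ‖Q‖ ^ r := by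
          have := norm_sub_le (1 : ℂ) (A * Q ^ r)
          simpa [norm_mul, norm_pow] using this
        have h2 := Real.add_one_le_exp (‖A‖ * ‖Q‖ ^ r)
        linarith
    _ = Real.exp (∑ r ∈ Finset.range k, ‖A‖ * ‖Q‖ ^ r) :=
        (Real.exp_sum _ _).symm
    _ ≤ Real.exp (‖A‖ * (1 - ‖Q‖)⁻¹) := by
        rw [Real.exp_le_exp, ← Finset.mul_sum]
        exact mul_le_mul_of_nonneg_left (geom_tail hQ k) (norm_nonneg A)

lemma exp_le_abs_qp {Q : ℂ} (hQ : ‖Q‖ < 1) (k : ℕ) :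
    Real.exp (-(‖Q‖ * (1 - ‖Q‖)⁻¹ * (1 - ‖Q‖)⁻¹))
      ≤ ‖qp Q Q k‖ := by
  set m := ‖Q‖ with hm
  set i := (1 - m)⁻¹ with hi
  have hm0 : 0 ≤ m := norm_nonneg Q
  have hm1 : 0 < 1 - m := by linarith
  have hi0 : 0 < i := inv_pos.mpr hm1
  have hii : i * (1 - m) = 1 := inv_mul_cancel₀ (ne_of_gt hm1)
  have key : ∀ r : ℕ, Real.exp (-(m ^ (r + 1) * i)) ≤ ‖1 - Q * Q ^ r‖ := by
    intro r
    set b := m ^ (r + 1) with hb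
    have hb0 : 0 ≤ b := pow_nonneg hm0 _
    have hbm : b ≤ m := by
      calc b ≤ m ^ 1 := pow_le_pow_of_le_one hm0 hQ.le (by omega)
        _ = m := pow_one m
    have hb1 : b < 1 := lt_of_le_of_lt hbm hQ
    have habs : ‖Q * Q ^ r‖ = b := by
      rw [norm_mul, norm_pow, hb, ← hm, pow_succ]; ring
    have h1 : 1 - b ≤ ‖1 - Q * Q ^ r‖ := by
      have := norm_sub_norm_le (1 : ℂ) (Q * Q ^ r)
      rw [norm_one, habs] at this
      exact this
    have hexp : 1 + b * i ≤ Real.exp (b * i) := by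
      linarith [Real.add_one_le_exp (b * i)]
    have hkey : 1 ≤ (1 - b) * (1 + b * i) := by
      nlinarith [mul_nonneg (mul_nonneg hb0 hi0.le) (sub_nonneg.2 hbm), hii]
    have hpos : (0:ℝ) < 1 + b * i := by positivity
    have h2 : Real.exp (-(b * i)) ≤ 1 - b := by
      rw [Real.exp_neg]
      calc (Real.exp (b * i))⁻¹ ≤ (1 + b * i)⁻¹ := by
            apply inv_anti₀ hpos hexp
        _ ≤ 1 - b := by
            rw [inv_le_iff_one_le_mul₀ hpos]
            linarith [hkey]
      
    exact h2.trans h1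
  rw [qp, norm_prod]
  calc Real.exp (-(m * i * i))
      ≤ Real.exp (∑ r ∈ Finset.range k, -(m ^ (r + 1) * i)) := by
        rw [Real.exp_le_exp]
        have : ∑ r ∈ Finset.range k, -(m ^ (r + 1) * i)
            = -((m * i) * ∑ r ∈ Finset.range k, m ^ r) := by
          rw [Finset.sum_neg_distrib, Finset.mul_sum, neg_inj]
          apply Finset.sum_congr rfl
          intro r _
          rw [pow_succ]
          ring
        rw [this]
        have hsum := geom_tail hQ k
        have hmi : 0 ≤ m * i := mul_nonneg hm0 hi0.le
        nlinarith [hsum, hmi]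
    _ = ∏ r ∈ Finset.range k, Real.exp (-(m ^ (r + 1) * i)) := Real.exp_sum _ _
    _ ≤ ∏ r ∈ Finset.range k, ‖1 - Q * Q ^ r‖ :=
        Finset.prod_le_prod (fun _ _ => (Real.exp_pos _).le) (fun r _ => key r)

/-- uniform bound for the coefficients -/
noncomputable def Cq (A Q : ℂ) : ℝ :=
  Real.exp (‖A‖ * (1 - ‖Q‖)⁻¹) *
    Real.exp (‖Q‖ * (1 - ‖Q‖)⁻¹ * (1 - ‖Q‖)⁻¹)

lemma Cq_pos (A Q : ℂ) : 0 < Cq A Q := by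
  unfold Cq; positivity

lemma abs_coeff_le {A Q : ℂ} (hQ : ‖Q‖ < 1) (k : ℕ) :
    ‖qp A Q k / qp Q Q k‖ ≤ Cq A Q := by
  have hl := exp_le_abs_qp hQ k
  have hpos : 0 < ‖qp Q Q k‖ := lt_of_lt_of_le (Real.exp_pos _) hl
  rw [norm_div]
  calc ‖qp A Q k‖ / ‖qp Q Q k‖
      ≤ Real.exp (‖A‖ * (1 - ‖Q‖)⁻¹) /
          Real.exp (-(‖Q‖ * (1 - ‖Q‖)⁻¹ * (1 - ‖Q‖)⁻¹)) := by
        apply div_le_div₀ (Real.exp_pos _).le (abs_qp_le hQ k) (Real.exp_pos _) hl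
    _ = Cq A Q := by
        rw [Real.exp_neg, Cq, div_eq_mul_inv, inv_inv]

lemma summable_aux {z : ℂ} (hz : ‖z‖ < 1) (f : ℕ → ℂ) (C : ℝ)
    (hf : ∀ k, ‖f k‖ ≤ C) : Summable fun k : ℕ => f k * z ^ k := by
  apply Summable.of_norm_bounded (g := fun k => C * ‖z‖ ^ k)
    ((summable_geometric_of_lt_one (norm_nonneg z) hz).mul_left C)
  intro k
  rw [norm_mul, norm_pow]
  exact mul_le_mul_of_nonneg_right (hf k) (pow_nonneg (norm_nonneg z) k)

lemma coeff_rec {A Q : ℂ} (hqp : ∀ k, qp Q Q k ≠ 0) (k : ℕ) :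
    qp A Q (k + 1) / qp Q Q (k + 1) * (1 - Q ^ (k + 1))
      = qp A Q k / qp Q Q k * (1 - A * Q ^ k) := by
  have h1 : qp A Q (k + 1) = qp A Q k * (1 - A * Q ^ k) := Finset.prod_range_succ _ _
  have h2 : qp Q Q (k + 1) = qp Q Q k * (1 - Q ^ (k + 1)) := by
    rw [qp, Finset.prod_range_succ, ← qp, pow_succ]
    ring
  have hk := hqp k
  have hk1 := hqp (k + 1)
  have hQk1 : (1 : ℂ) - Q ^ (k + 1) ≠ 0 := by
    intro hcon
    apply hk1
    rw [h2, hcon, mul_zero]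
  rw [h1, h2]
  field_simp

lemma qS_FE {A Q : ℂ} (hQ : ‖Q‖ < 1) (hqp : ∀ k, qp Q Q k ≠ 0) {z : ℂ}
    (hz : ‖z‖ < 1) :
    (1 - z) * qS A Q z = (1 - A * z) * qS A Q (Q * z) := by
  set c : ℕ → ℂ := fun k => qp A Q k / qp Q Q k with hc
  have hC : ∀ k, ‖c k‖ ≤ Cq A Q := fun k => abs_coeff_le hQ k
  have hQz : ‖Q * z‖ < 1 := by
    rw [norm_mul]
    nlinarith [norm_nonneg Q, norm_nonneg z]
  have hQk1 : ∀ k : ℕ, ‖Q ^ k‖ ≤ 1 := by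
    intro k
    rw [norm_pow]
    exact pow_le_one₀ (norm_nonneg Q) hQ.le
  have hC3 : ∀ k, ‖c k * (1 - Q ^ k)‖ ≤ Cq A Q * 2 := by
    intro k
    rw [norm_mul]
    apply mul_le_mul (hC k) ?_ (norm_nonneg _) (Cq_pos A Q).le
    calc ‖1 - Q ^ k‖ ≤ ‖(1:ℂ)‖ + ‖Q ^ k‖ := norm_sub_le 1 (Q ^ k)
      _ ≤ 2 := by
          rw [norm_one]
          linarith [hQk1 k]
  have S1 : Summable fun k => c k * z ^ k := summable_aux hz c _ hC
  have S2 : Summable fun k => c k * (Q * z) ^ k := summable_aux hQz c _ hC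
  have S1' : Summable fun k => z * (c k * z ^ k) := S1.mul_left z
  have S2' : Summable fun k => (A * z) * (c k * (Q * z) ^ k) := S2.mul_left (A * z)
  have S3 : Summable fun k => c k * (1 - Q ^ k) * z ^ k :=
    summable_aux hz (fun k => c k * (1 - Q ^ k)) _ hC3
  have key : ∑' k : ℕ, c k * (1 - Q ^ k) * z ^ k
      = ∑' k : ℕ, c k * (1 - A * Q ^ k) * z ^ k * z := by
    rw [Summable.tsum_eq_zero_add S3]
    have h0 : c 0 * (1 - Q ^ 0) * z ^ 0 = 0 := by
      simp
    rw [h0, zero_add]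
    apply tsum_congr
    intro k
    have hrec := coeff_rec (A := A) hqp k
    calc c (k + 1) * (1 - Q ^ (k + 1)) * z ^ (k + 1)
        = c k * (1 - A * Q ^ k) * z ^ (k + 1) := by rw [hc]; rw [hrec]
      _ = c k * (1 - A * Q ^ k) * z ^ k * z := by rw [pow_succ]; ring
  have e1 : (1 - z) * qS A Q z = (∑' k : ℕ, c k * z ^ k) - ∑' k : ℕ, z * (c k * z ^ k) := by
    rw [qS, one_sub_mul, tsum_mul_left]
  have e2 : (1 - A * z) * qS A Q (Q * z)
      = (∑' k : ℕ, c k * (Q * z) ^ k) - ∑' k : ℕ, (A * z) * (c k * (Q * z) ^ k) := by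
    rw [qS, one_sub_mul, tsum_mul_left]
  rw [e1, e2, sub_eq_sub_iff_sub_eq_sub, ← Summable.tsum_sub S1 S2, ← Summable.tsum_sub S1' S2']
  calc ∑' k : ℕ, (c k * z ^ k - c k * (Q * z) ^ k)
      = ∑' k : ℕ, c k * (1 - Q ^ k) * z ^ k := by
        apply tsum_congr
        intro k
        rw [mul_pow]
        ring
    _ = ∑' k : ℕ, c k * (1 - A * Q ^ k) * z ^ k * z := key
    _ = ∑' k : ℕ, (z * (c k * z ^ k) - (A * z) * (c k * (Q * z) ^ k)) := by
        apply tsum_congr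
        intro k
        rw [mul_pow]
        ring

lemma qS_iter {A Q : ℂ} (hQ : ‖Q‖ < 1) (hqp : ∀ k, qp Q Q k ≠ 0) {z : ℂ}
    (hz : ‖z‖ < 1) (n : ℕ) :
    qp z Q n * qS A Q z = qp (A * z) Q n * qS A Q (Q ^ n * z) := by
  induction n with
  | zero => simp [qp]
  | succ n ih =>
    have hzn : ‖Q ^ n * z‖ < 1 := by
      rw [norm_mul, norm_pow]
      have h1 : ‖Q‖ ^ n ≤ 1 := pow_le_one₀ (norm_nonneg Q) hQ.le
      nlinarith [norm_nonneg z, pow_nonneg (norm_nonneg Q) n]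
    have fe := qS_FE (A := A) hQ hqp hzn
    have e1 : qp z Q (n + 1) = qp z Q n * (1 - z * Q ^ n) := Finset.prod_range_succ _ _
    have e2 : qp (A * z) Q (n + 1) = qp (A * z) Q n * (1 - A * z * Q ^ n) :=
      Finset.prod_range_succ _ _
    have e3 : Q * (Q ^ n * z) = Q ^ (n + 1) * z := by rw [pow_succ]; ring
    rw [e1, e2]
    calc qp z Q n * (1 - z * Q ^ n) * qS A Q z
        = (1 - z * Q ^ n) * (qp z Q n * qS A Q z) := by ring
      _ = (1 - z * Q ^ n) * (qp (A * z) Q n * qS A Q (Q ^ n * z)) := by rw [ih]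
      _ = qp (A * z) Q n * ((1 - Q ^ n * z) * qS A Q (Q ^ n * z)) := by ring
      _ = qp (A * z) Q n * ((1 - A * (Q ^ n * z)) * qS A Q (Q * (Q ^ n * z))) := by rw [fe]
      _ = qp (A * z) Q n * (1 - A * z * Q ^ n) * qS A Q (Q ^ (n + 1) * z) := by
          rw [e3]; ring

lemma qS_tendsto_one {A Q z : ℂ} (hQ : ‖Q‖ < 1) (hz : ‖z‖ < 1) :
    Tendsto (fun n : ℕ => qS A Q (Q ^ n * z)) atTop (nhds 1) := by
  set C := Cq A Q with hCdef
  have hC : ∀ k, ‖qp A Q k / qp Q Q k‖ ≤ C := fun k => abs_coeff_le hQ k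
  have main : ∀ w : ℂ, ‖w‖ ≤ ‖z‖ →
      ‖qS A Q w - 1‖ ≤ C * (1 - ‖z‖)⁻¹ * ‖w‖ := by
    intro w hw
    have hw1 : ‖w‖ < 1 := lt_of_le_of_lt hw hz
    have hsum : Summable fun k : ℕ => qp A Q k / qp Q Q k * w ^ k :=
      summable_aux hw1 _ _ hC
    have e0 : qS A Q w - 1 = ∑' k : ℕ, qp A Q (k + 1) / qp Q Q (k + 1) * w ^ (k + 1) := by
      rw [qS, Summable.tsum_eq_zero_add hsum]
      have : qp A Q 0 / qp Q Q 0 * w ^ 0 = 1 := by simp [qp]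
      rw [this]
      ring
    rw [e0]
    have hb : ∀ k : ℕ, ‖qp A Q (k + 1) / qp Q Q (k + 1) * w ^ (k + 1)‖
        ≤ C * ‖z‖ ^ k * ‖w‖ := by
      intro k
      rw [norm_mul, norm_pow]
      calc ‖qp A Q (k + 1) / qp Q Q (k + 1)‖ * ‖w‖ ^ (k + 1)
          ≤ C * ‖w‖ ^ (k + 1) :=
            mul_le_mul_of_nonneg_right (hC _) (pow_nonneg (norm_nonneg w) _)
        _ = C * ‖w‖ ^ k * ‖w‖ := by rw [pow_succ]; ring
        _ ≤ C * ‖z‖ ^ k * ‖w‖ := by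
            have h1 : ‖w‖ ^ k ≤ ‖z‖ ^ k :=
              pow_le_pow_left₀ (norm_nonneg w) hw k
            exact mul_le_mul_of_nonneg_right
              (mul_le_mul_of_nonneg_left h1 (Cq_pos A Q).le) (norm_nonneg w)
    have hgs : Summable fun k : ℕ => C * ‖z‖ ^ k * ‖w‖ := by
      have := ((summable_geometric_of_lt_one (norm_nonneg z) hz).mul_left C).mul_right
        (‖w‖)
      simpa [mul_assoc] using this
    have hns : Summable fun k : ℕ => ‖qp A Q (k + 1) / qp Q Q (k + 1) * w ^ (k + 1)‖ :=
      Summable.of_nonneg_of_le (fun _ => norm_nonneg _) hb hgs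
    calc ‖∑' k : ℕ, qp A Q (k + 1) / qp Q Q (k + 1) * w ^ (k + 1)‖
        ≤ ∑' k : ℕ, ‖qp A Q (k + 1) / qp Q Q (k + 1) * w ^ (k + 1)‖ :=
          norm_tsum_le_tsum_norm hns
      _ ≤ ∑' k : ℕ, C * ‖z‖ ^ k * ‖w‖ := Summable.tsum_le_tsum hb hns hgs
      _ = C * (1 - ‖z‖)⁻¹ * ‖w‖ := by
          rw [tsum_mul_right, tsum_mul_left, tsum_geometric_of_lt_one
            (norm_nonneg z) hz]
  have hnorm : ∀ n : ℕ, ‖qS A Q (Q ^ n * z) - 1‖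
      ≤ (C * (1 - ‖z‖)⁻¹ * ‖z‖) * ‖Q‖ ^ n := by
    intro n
    have hQn1 : ‖Q‖ ^ n ≤ 1 := pow_le_one₀ (norm_nonneg Q) hQ.le
    have hwle : ‖Q ^ n * z‖ ≤ ‖z‖ := by
      rw [norm_mul, norm_pow]
      nlinarith [norm_nonneg z]
    refine (main _ hwle).trans ?_
    rw [norm_mul, norm_pow]
    apply le_of_eq
    ring
  have h0 : Tendsto (fun n : ℕ => (C * (1 - ‖z‖)⁻¹ * ‖z‖) *
      ‖Q‖ ^ n) atTop (nhds 0) := by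
    simpa using (tendsto_pow_atTop_nhds_zero_of_lt_one (norm_nonneg Q) hQ).const_mul
      (C * (1 - ‖z‖)⁻¹ * ‖z‖)
  exact tendsto_sub_nhds_zero_iff.mp (squeeze_zero_norm hnorm h0)

/-- The q-binomial theorem. -/
lemma qbinom {A Q z : ℂ} (hQ : ‖Q‖ < 1) (hz : ‖z‖ < 1)
    (hqp : ∀ k, qp Q Q k ≠ 0) (h0 : qpInf z Q ≠ 0) (h0' : qpInf (A * z) Q ≠ 0) :
    qpInf z Q * qS A Q z = qpInf (A * z) Q := by
  have hf1 : ∀ r : ℕ, 1 - z * Q ^ r ≠ 0 := factor_ne_zero h0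
  have hf2 : ∀ r : ℕ, 1 - A * z * Q ^ r ≠ 0 := factor_ne_zero h0'
  have t1 : Tendsto (fun n => qp z Q n * qS A Q z) atTop (nhds (qpInf z Q * qS A Q z)) :=
    (tendsto_qp hQ hf1).mul_const _
  have t2 : Tendsto (fun n => qp (A * z) Q n * qS A Q (Q ^ n * z)) atTop
      (nhds (qpInf (A * z) Q * 1)) :=
    (tendsto_qp hQ hf2).mul (qS_tendsto_one hQ hz)
  have := tendsto_nhds_unique (t1.congr (fun n => qS_iter hQ hqp hz n)) t2
  rw [this, mul_one]

lemma qS_eq {A Q z : ℂ} (hQ : ‖Q‖ < 1) (hz : ‖z‖ < 1)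
    (hqp : ∀ k, qp Q Q k ≠ 0) (h0 : qpInf z Q ≠ 0) (h0' : qpInf (A * z) Q ≠ 0) :
    qS A Q z = qpInf (A * z) Q / qpInf z Q := by
  rw [eq_div_iff h0, mul_comm]
  exact qbinom hQ hz hqp h0 h0'

end QAux

open QAux

set_option maxHeartbeats 1000000

/-- bibasic generalization of Entry 1.4.2. -/
theorem entry_1_4_2_bibasic (q h t a b : ℂ)
    (hqh : ‖q ^ h‖ < 1) (hqt : ‖q ^ t‖ < 1)
    (hqht : ‖q ^ (h * t)‖ < 1)
    (h1 : qpInf (q ^ h) (q ^ h) ≠ 0)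
    (h2 : ∀ j : ℕ, qp (q ^ t) (q ^ t) j ≠ 0)
    (h3 : ∀ j : ℕ, qpc1 (a * q) (q ^ h) (q ^ (h * t)) j ≠ 0)
    (h4 : ∀ j : ℕ, qpInf (q ^ h * (q ^ (h * t)) ^ j) (q ^ h) ≠ 0)
    (h5 : ∀ j : ℕ, qpInf (a * q * q ^ h * (q ^ (h * t)) ^ j) (q ^ h) ≠ 0)
    (h6 : ∀ k : ℕ, qp (q ^ h) (q ^ h) k ≠ 0)
    (h7 : ∀ k : ℕ, qpc1 (-b * q) (q ^ t) (q ^ (h * t)) k ≠ 0)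
    (h8 : ∀ k : ℕ, qpInf (q ^ t * (q ^ (h * t)) ^ k) (q ^ t) ≠ 0)
    (h9 : ∀ k : ℕ, qpInf (-b * q * q ^ t * (q ^ (h * t)) ^ k) (q ^ t) ≠ 0) :
    (qpInf (q ^ t) (q ^ t) * qpInf (a * q) (q ^ h) / qpInf (q ^ h) (q ^ h)) *
      ∑' j : ℕ, (qp (-b * q) (q ^ t) j / qp (q ^ t) (q ^ t) j) *
        (qpc (q ^ h) (q ^ h) (q ^ (h * t)) j / qpc1 (a * q) (q ^ h) (q ^ (h * t)) j) *
        (q ^ t) ^ j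
    = qpInf (-b * q) (q ^ t) *
      ∑' k : ℕ, (qp (a * q) (q ^ h) k / qp (q ^ h) (q ^ h) k) *
        (qpc (q ^ t) (q ^ t) (q ^ (h * t)) k / qpc1 (-b * q) (q ^ t) (q ^ (h * t)) k) *
        (q ^ h) ^ k := by
  set x := q ^ t with hx
  set y := q ^ h with hy
  set Q := q ^ (h * t) with hQdef
  -- basic nonvanishing facts
  have hA : qpInf (a * q) y ≠ 0 := by
    intro hz
    apply h3 0
    rw [qpc1, hz, zero_div]
  have hB : qpInf (-b * q) x ≠ 0 := by
    intro hz
    apply h7 0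
    rw [qpc1, hz, zero_div]
  -- absolute value facts
  have habsQ : ∀ j : ℕ, ‖Q ^ j‖ ≤ 1 := by
    intro j
    rw [norm_pow]
    exact pow_le_one₀ (norm_nonneg Q) hqht.le
  have hyQ : ∀ j : ℕ, ‖y * Q ^ j‖ < 1 := by
    intro j
    rw [norm_mul]
    calc ‖y‖ * ‖Q ^ j‖ ≤ ‖y‖ * 1 :=
          mul_le_mul_of_nonneg_left (habsQ j) (norm_nonneg y)
      _ = ‖y‖ := mul_one _
      _ < 1 := hqh
  have hxQ : ∀ k : ℕ, ‖x * Q ^ k‖ < 1 := by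
    intro k
    rw [norm_mul]
    calc ‖x‖ * ‖Q ^ k‖ ≤ ‖x‖ * 1 :=
          mul_le_mul_of_nonneg_left (habsQ k) (norm_nonneg x)
      _ = ‖x‖ := mul_one _
      _ < 1 := hqt
  -- the common double-sum kernel
  set g : ℕ → ℕ → ℂ := fun j k =>
    qpInf x x * (qp (-b * q) x j / qp x x j) * (qp (a * q) y k / qp y y k) *
      x ^ j * y ^ k * Q ^ (j * k) with hg
  -- q-binomial expansions
  have hqsL : ∀ j : ℕ, qS (a * q) y (y * Q ^ j)
      = qpInf (a * q * y * Q ^ j) y / qpInf (y * Q ^ j) y := by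
    intro j
    have h5' : qpInf (a * q * (y * Q ^ j)) y ≠ 0 := by
      rw [show a * q * (y * Q ^ j) = a * q * y * Q ^ j by ring]
      exact h5 j
    rw [qS_eq hqh (hyQ j) h6 (h4 j) h5',
      show a * q * (y * Q ^ j) = a * q * y * Q ^ j by ring]
  have hqsR : ∀ k : ℕ, qS (-b * q) x (x * Q ^ k)
      = qpInf (-b * q * x * Q ^ k) x / qpInf (x * Q ^ k) x := by
    intro k
    have h9' : qpInf (-b * q * (x * Q ^ k)) x ≠ 0 := by
      rw [show -b * q * (x * Q ^ k) = -b * q * x * Q ^ k by ring]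
      exact h9 k
    rw [qS_eq hqt (hxQ k) h2 (h8 k) h9',
      show -b * q * (x * Q ^ k) = -b * q * x * Q ^ k by ring]
  -- pointwise identity for the left-hand terms
  have hL : ∀ j : ℕ,
      (qpInf x x * qpInf (a * q) y / qpInf y y) *
        ((qp (-b * q) x j / qp x x j) * (qpc y y Q j / qpc1 (a * q) y Q j) * x ^ j)
      = ∑' k : ℕ, g j k := by
    intro j
    have e1 : (qpInf x x * qpInf (a * q) y / qpInf y y) *
        ((qp (-b * q) x j / qp x x j) * (qpc y y Q j / qpc1 (a * q) y Q j) * x ^ j)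
        = qpInf x x * (qp (-b * q) x j / qp x x j) * x ^ j * qS (a * q) y (y * Q ^ j) := by
      rw [hqsL j, qpc, qpc1]
      field_simp [hA, h1, h2 j, h4 j, h5 j]
    rw [e1, qS, ← tsum_mul_left]
    apply tsum_congr
    intro k
    simp only [hg]
    rw [mul_pow, ← pow_mul]
    ring
  -- pointwise identity for the right-hand terms
  have hR : ∀ k : ℕ,
      qpInf (-b * q) x *
        ((qp (a * q) y k / qp y y k) * (qpc x x Q k / qpc1 (-b * q) x Q k) * y ^ k)
      = ∑' j : ℕ, g j k := by
    intro k
    have e1 : qpInf (-b * q) x *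
        ((qp (a * q) y k / qp y y k) * (qpc x x Q k / qpc1 (-b * q) x Q k) * y ^ k)
        = qpInf x x * (qp (a * q) y k / qp y y k) * y ^ k * qS (-b * q) x (x * Q ^ k) := by
      have hB' : qpInf (-(b * q)) x ≠ 0 := by rwa [neg_mul] at hB
      rw [hqsR k, qpc, qpc1]
      field_simp [hB', h6 k, h8 k, h9 k]
    rw [e1, qS, ← tsum_mul_left]
    apply tsum_congr
    intro j
    simp only [hg]
    rw [mul_pow, ← pow_mul, Nat.mul_comm k j]
    ring
  -- summability of the kernel over ℕ × ℕ
  have hgsum : Summable (Function.uncurry g) := by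
    have hKnn : 0 ≤ ‖qpInf x x‖ * Cq (-b * q) x * Cq (a * q) y :=
      mul_nonneg (mul_nonneg (norm_nonneg _) (Cq_pos _ _).le) (Cq_pos _ _).le
    apply Summable.of_norm_bounded (g := fun p : ℕ × ℕ =>
      (‖qpInf x x‖ * Cq (-b * q) x * Cq (a * q) y * ‖x‖ ^ p.1) *
        ‖y‖ ^ p.2)
    · exact Summable.mul_of_nonneg
        ((summable_geometric_of_lt_one (norm_nonneg x) hqt).mul_left _)
        (summable_geometric_of_lt_one (norm_nonneg y) hqh)
        (fun j => mul_nonneg hKnn (pow_nonneg (norm_nonneg x) j))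
        (fun k => pow_nonneg (norm_nonneg y) k)
    · rintro ⟨j, k⟩
      have b1 : ‖qp (-b * q) x j / qp x x j‖ ≤ Cq (-b * q) x := abs_coeff_le hqt j
      have b2 : ‖qp (a * q) y k / qp y y k‖ ≤ Cq (a * q) y := abs_coeff_le hqh k
      have b3 : ‖Q‖ ^ (j * k) ≤ 1 :=
        pow_le_one₀ (norm_nonneg Q) hqht.le
      have : ‖Function.uncurry g (j, k)‖
          = ‖qpInf x x‖ * ‖qp (-b * q) x j / qp x x j‖ *
            ‖qp (a * q) y k / qp y y k‖ * ‖x‖ ^ j *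
            ‖y‖ ^ k * ‖Q‖ ^ (j * k) := by
        simp only [Function.uncurry, hg, norm_mul, norm_pow]
      rw [this]
      calc ‖qpInf x x‖ * ‖qp (-b * q) x j / qp x x j‖ *
            ‖qp (a * q) y k / qp y y k‖ * ‖x‖ ^ j *
            ‖y‖ ^ k * ‖Q‖ ^ (j * k)
          ≤ ‖qpInf x x‖ * Cq (-b * q) x * Cq (a * q) y * ‖x‖ ^ j *
            ‖y‖ ^ k * 1 := by
            gcongr <;>
              first
                | exact mul_nonneg (norm_nonneg _) (Cq_pos _ _).le
                | exact (Cq_pos _ _).le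
                | exact norm_nonneg _
                | positivity
        _ = ‖qpInf x x‖ * Cq (-b * q) x * Cq (a * q) y * ‖x‖ ^ j *
            ‖y‖ ^ k := by ring
        _ ≤ (‖qpInf x x‖ * Cq (-b * q) x * Cq (a * q) y * ‖x‖ ^ j) *
            ‖y‖ ^ k := le_of_eq (by ring)
  -- put everything together
  calc (qpInf x x * qpInf (a * q) y / qpInf y y) *
      ∑' j : ℕ, (qp (-b * q) x j / qp x x j) * (qpc y y Q j / qpc1 (a * q) y Q j) * x ^ j
      = ∑' j : ℕ, (qpInf x x * qpInf (a * q) y / qpInf y y) *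
          ((qp (-b * q) x j / qp x x j) * (qpc y y Q j / qpc1 (a * q) y Q j) * x ^ j) :=
        tsum_mul_left.symm
    _ = ∑' j : ℕ, ∑' k : ℕ, g j k := tsum_congr hL
    _ = ∑' k : ℕ, ∑' j : ℕ, g j k :=
        (Summable.tsum_comm' hgsum (fun j => hgsum.prod_factor j)
          (fun k => hgsum.prod_symm.prod_factor k)).symm
    _ = ∑' k : ℕ, qpInf (-b * q) x *
          ((qp (a * q) y k / qp y y k) * (qpc x x Q k / qpc1 (-b * q) x Q k) * y ^ k) :=
        tsum_congr (fun k => (hR k).symm)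
    _ = qpInf (-b * q) x *
          ∑' k : ℕ, (qp (a * q) y k / qp y y k) * (qpc x x Q k / qpc1 (-b * q) x Q k) * y ^ k :=
        tsum_mul_left
end
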